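/- arXiv:cs/0508119 — 3 statements merged into one kernel-verified Lean document; each statement's English description precedes it below -/
import Mathlib

section
/- Let (Ȳ,Z̄,V) be random variables over finite alphabets with joint pmf p'(ȳ,v)·∏_{m=1}^{M'} q'_m(z_m|y_m), and let B* be the set of R' ∈ ℝ^{M'} with I(Ȳ_I;Z̄_I|Z̄_{I^c},V) ≤ Σ_{i∈I} R'_i for every nonempty I ⊆ {1,…,M'}. For each permutation π of {1,…,M'} let R'^{*(π)} be defined by R'^{*(π)}_{π(i)} = I(Y_{π(i)};Z_{π(i)}|Z̄_{π({1,…,i−1})},V). Then for every R' ∈ B* there exist nonnegative reals {λ_π}_{π ∈ Π} indexed by the permutations of {1,…,M'} with Σ_π λ_π = 1 such that Σ_π λ_π R'^{*(π)}_i ≤ R'_i for every i ∈ {1,…,M'}. -/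
open Finset
open scoped Classical

noncomputable section

/-- The distribution (pmf) of the random variable `X` under the pmf `P` on the finite
sample space `Ω`. -/
def dist {Ω α : Type*} [Fintype Ω] [Fintype α] (P : Ω → ℝ) (X : Ω → α) (a : α) : ℝ :=
  ∑ ω, if X ω = a then P ω else 0

/-- Shannon entropy (base 2) of the random variable `X` under the pmf `P`. -/
def Hent {Ω α : Type*} [Fintype Ω] [Fintype α] (P : Ω → ℝ) (X : Ω → α) : ℝ :=
  -∑ a, dist P X a * Real.logb 2 (dist P X a)

/-- Conditional entropy `H(X | Y)`. -/
def condEnt {Ω α β : Type*} [Fintype Ω] [Fintype α] [Fintype β]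
    (P : Ω → ℝ) (X : Ω → α) (Y : Ω → β) : ℝ :=
  Hent P (fun ω => (X ω, Y ω)) - Hent P Y

/-- Conditional mutual information `I(X ; Y | Z)`. -/
def condMI {Ω α β γ : Type*} [Fintype Ω] [Fintype α] [Fintype β] [Fintype γ]
    (P : Ω → ℝ) (X : Ω → α) (Y : Ω → β) (Z : Ω → γ) : ℝ :=
  Hent P (fun ω => (X ω, Z ω)) + Hent P (fun ω => (Y ω, Z ω))
    - Hent P (fun ω => (X ω, Y ω, Z ω)) - Hent P Z

/-- The ε-strongly typical set condition for a sequence `xs` with respect to pmf `p`: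
`|N(a|xs)/n − p(a)| < ε/|α|` for every letter `a`. -/
def StronglyTypical {α : Type*} [Fintype α] (p : α → ℝ) {n : ℕ} (xs : Fin n → α)
    (ε : ℝ) : Prop :=
  ∀ a : α, |((Finset.univ.filter fun k => xs k = a).card : ℝ) / n - p a|
    < ε / Fintype.card α

section YZV

variable {M' : ℕ}

/-- Canonical sample space for `(Ȳ, Z̄, V)`. -/
abbrev Samp (𝒴 𝒵 : Fin M' → Type*) (V : Type*) : Type _ :=
  (∀ i, 𝒴 i) × (∀ i, 𝒵 i) × V

variable {𝒴 𝒵 : Fin M' → Type*} [∀ i, Fintype (𝒴 i)] [∀ i, Fintype (𝒵 i)]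
  {V : Type*} [Fintype V]

/-- The joint pmf `p'(ȳ,v) · ∏ₘ q'ₘ(zₘ | yₘ)` on the canonical sample space: conditionally
on `(Ȳ,V)` the `Zₘ` are mutually independent and `Zₘ` depends only on `Yₘ`. -/
def Pjoint (p' : (∀ i, 𝒴 i) × V → ℝ) (q : ∀ m, 𝒴 m → 𝒵 m → ℝ) :
    Samp 𝒴 𝒵 V → ℝ :=
  fun ω => p' (ω.1, ω.2.2) * ∏ m, q m (ω.1 m) (ω.2.1 m)

/-- `Ȳ_I`. -/
def Ybar (I : Finset (Fin M')) : Samp 𝒴 𝒵 V → (∀ i : I, 𝒴 i.1) := fun ω i => ω.1 i.1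

/-- `Z̄_I`. -/
def Zbar (I : Finset (Fin M')) : Samp 𝒴 𝒵 V → (∀ i : I, 𝒵 i.1) := fun ω i => ω.2.1 i.1

/-- The pair `(Z̄_I, V)` used as a conditioning variable. -/
def ZbarV (I : Finset (Fin M')) : Samp 𝒴 𝒵 V → (∀ i : I, 𝒵 i.1) × V :=
  fun ω => (fun i => ω.2.1 i.1, ω.2.2)

/-- Membership in the region `B*`: `I(Ȳ_I; Z̄_I | Z̄_{Iᶜ}, V) ≤ Σ_{i∈I} R_i` for every
nonempty `I ⊆ {1,…,M'}`. -/
def memBstar (p' : (∀ i, 𝒴 i) × V → ℝ) (q : ∀ m, 𝒴 m → 𝒵 m → ℝ)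
    (R : Fin M' → ℝ) : Prop :=
  ∀ I : Finset (Fin M'), I.Nonempty →
    condMI (Pjoint p' q) (Ybar I) (Zbar I) (ZbarV Iᶜ) ≤ ∑ i ∈ I, R i

end YZV

set_option linter.unusedSectionVars false
set_option maxHeartbeats 1000000

section General
variable {Ω α β γ : Type*} [Fintype Ω] [Fintype α] [Fintype β] [Fintype γ]

lemma dist_comp (P : Ω → ℝ) (X : Ω → α) (g : α → γ) (b : γ) :
    dist P (fun ω => g (X ω)) b = ∑ a, if g a = b then dist P X a else 0 := by
  have h1 : ∀ a : α, (if g a = b then dist P X a else 0)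
      = ∑ ω, if X ω = a then (if g a = b then P ω else 0) else 0 := by
    intro a
    by_cases h : g a = b <;> simp [_root_.dist, h]
  rw [Finset.sum_congr rfl (fun a _ => h1 a), Finset.sum_comm]
  refine Finset.sum_congr rfl fun ω _ => ?_
  rw [Fintype.sum_ite_eq (X ω) (fun a => if g a = b then P ω else 0)]

lemma dist_marginal (P : Ω → ℝ) (X : Ω → α) (W : Ω → β) (a : α) :
    dist P X a = ∑ b, dist P (fun ω => (X ω, W ω)) (a, b) := by
  unfold _root_.dist
  rw [Finset.sum_comm]
  refine Finset.sum_congr rfl fun ω _ => ?_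
  by_cases h : X ω = a
  · simp [Prod.ext_iff, h]
  · simp [Prod.ext_iff, h]

lemma exp_comp (P : Ω → ℝ) (X : Ω → α) (g : α → γ) (F : γ → ℝ) :
    ∑ c, dist P (fun ω => g (X ω)) c * F c = ∑ a, dist P X a * F (g a) := by
  simp_rw [dist_comp, Finset.sum_mul]
  rw [Finset.sum_comm]
  refine Finset.sum_congr rfl fun a _ => ?_
  simp_rw [ite_mul, zero_mul]
  rw [Fintype.sum_ite_eq (g a) (fun c => dist P X a * F c)]

lemma Hent_congr' (P : Ω → ℝ) (X : Ω → α) (Xc : Ω → γ) (g : α → γ)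
    (hg : ∀ ω, g (X ω) = Xc ω) (hinj : ∀ ω₁ ω₂, Xc ω₁ = Xc ω₂ → X ω₁ = X ω₂) :
    Hent P Xc = Hent P X := by
  classical
  have hXc : Xc = fun ω => g (X ω) := funext fun ω => (hg ω).symm
  subst hXc
  set d := dist P X with hd
  set D := Finset.univ.filter (fun a => d a ≠ 0) with hD
  have hmemD : ∀ a ∈ D, ∃ ω, X ω = a := by
    intro a ha
    by_contra hcon
    push_neg at hcon
    have : d a = 0 := Finset.sum_eq_zero fun ω _ => if_neg (hcon ω)
    rw [hD] at ha
    simp at ha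
    exact ha this
  have hinjD : ∀ a₁ ∈ D, ∀ a₂ ∈ D, g a₁ = g a₂ → a₁ = a₂ := by
    intro a₁ h₁ a₂ h₂ hgg
    obtain ⟨ω₁, rfl⟩ := hmemD a₁ h₁
    obtain ⟨ω₂, rfl⟩ := hmemD a₂ h₂
    exact hinj ω₁ ω₂ hgg
  have hdist : ∀ a ∈ D, dist P (fun ω => g (X ω)) (g a) = d a := by
    intro a ha
    rw [dist_comp]
    have : ∀ a' : α, (if g a' = g a then d a' else 0) = if a' = a then d a' else 0 := by
      intro a'
      by_cases h1 : a' = a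
      · subst h1; simp
      · rw [if_neg h1]
        by_cases h2 : g a' = g a
        · rw [if_pos h2]
          by_contra hne
          by_cases hd' : d a' = 0
          · exact hne hd'
          · exact h1 (hinjD a' (by simp [hD, hd']) a (by exact ha) h2) |>.elim
        · rw [if_neg h2]
    rw [Finset.sum_congr rfl (fun a' _ => this a')]
    exact Fintype.sum_ite_eq' a d
  have himage : ∀ b, b ∉ D.image g → dist P (fun ω => g (X ω)) b = 0 := by
    intro b hb
    rw [dist_comp]
    apply Finset.sum_eq_zero
    intro a _
    by_cases h : g a = b
    · rw [if_pos h]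
      by_contra hd'
      exact hb (Finset.mem_image.2 ⟨a, by rw [hD, Finset.mem_filter]; exact ⟨Finset.mem_univ _, hd'⟩, h⟩)
    · rw [if_neg h]
  unfold Hent
  congr 1
  calc ∑ c, dist P (fun ω => g (X ω)) c * Real.logb 2 (dist P (fun ω => g (X ω)) c)
      = ∑ c ∈ D.image g, dist P (fun ω => g (X ω)) c
          * Real.logb 2 (dist P (fun ω => g (X ω)) c) := by
          refine (Finset.sum_subset (Finset.subset_univ _) ?_).symm
          intro c _ hc
          rw [himage c hc]; simp
    _ = ∑ a ∈ D, dist P (fun ω => g (X ω)) (g a)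
          * Real.logb 2 (dist P (fun ω => g (X ω)) (g a)) := Finset.sum_image hinjD
    _ = ∑ a ∈ D, d a * Real.logb 2 (d a) := by
          refine Finset.sum_congr rfl fun a ha => ?_
          rw [hdist a ha]
    _ = ∑ a, d a * Real.logb 2 (d a) := by
          refine Finset.sum_subset (Finset.subset_univ _) ?_
          intro a _ ha
          have : d a = 0 := by
            by_contra h0
            exact ha (by simp [hD, h0])
          rw [this]; simp

lemma chain (P : Ω → ℝ) (X : Ω → α) (W : Ω → β) (k : α → β → ℝ)
    (hf : ∀ a b, dist P (fun ω => (X ω, W ω)) (a, b) = dist P X a * k a b) :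
    Hent P (fun ω => (X ω, W ω))
      = Hent P X + ∑ a, dist P X a * -(∑ b, k a b * Real.logb 2 (k a b)) := by
  classical
  have hsum : ∀ a, dist P X a ≠ 0 → ∑ b, k a b = 1 := by
    intro a ha
    have h1 := dist_marginal P X W a
    rw [Finset.sum_congr rfl (fun b _ => hf a b), ← Finset.mul_sum] at h1
    have h2 : dist P X a * 1 = dist P X a * ∑ b, k a b := by rw [mul_one, ← h1]
    exact (mul_left_cancel₀ ha h2).symm
  unfold Hent
  rw [Fintype.sum_prod_type]
  have key : ∀ a, (∑ b, dist P (fun ω => (X ω, W ω)) (a, b)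
        * Real.logb 2 (dist P (fun ω => (X ω, W ω)) (a, b)))
      = dist P X a * Real.logb 2 (dist P X a)
        + dist P X a * ∑ b, k a b * Real.logb 2 (k a b) := by
    intro a
    by_cases ha : dist P X a = 0
    · simp [hf, ha]
    · have h2 : ∀ b, dist P X a * k a b * Real.logb 2 (dist P X a * k a b)
          = (k a b * (dist P X a * Real.logb 2 (dist P X a)))
            + dist P X a * (k a b * Real.logb 2 (k a b)) := by
        intro b
        by_cases hb : k a b = 0
        · simp [hb]
        · rw [Real.logb_mul ha hb]; ring
      simp_rw [hf, h2]
      rw [Finset.sum_add_distrib, ← Finset.sum_mul, ← Finset.mul_sum, hsum a ha, one_mul]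
  rw [Finset.sum_congr rfl (fun a _ => key a), Finset.sum_add_distrib]
  simp only [mul_neg, Finset.sum_neg_distrib]
  ring

end General

section YZV0

variable {M' : ℕ} {𝒴 𝒵 : Fin M' → Type*} [∀ i, Fintype (𝒴 i)] [∀ i, Fintype (𝒵 i)]
  {V : Type*} [Fintype V]

/-- canonical representation of `(Ȳ_T, Z̄_U, V)` with `Option`-junk outside `T`,`U`. -/
def YZ (T U : Finset (Fin M')) : Samp 𝒴 𝒵 V → (∀ i, Option (𝒴 i)) × (∀ i, Option (𝒵 i)) × V :=
  fun ω => (fun i => if i ∈ T then some (ω.1 i) else none,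
            fun i => if i ∈ U then some (ω.2.1 i) else none, ω.2.2)

variable (p' : (∀ i, 𝒴 i) × V → ℝ) (q : ∀ m, 𝒴 m → 𝒵 m → ℝ)

lemma sum_prod_q (F : ∀ m : Fin M', 𝒵 m → ℝ) :
    ∑ z : ∀ i, 𝒵 i, ∏ m, F m (z m) = ∏ m, ∑ s, F m s := by
  rw [Finset.prod_univ_sum, Fintype.piFinset_univ]

lemma zsum (hq1 : ∀ m y, ∑ z, q m y z = 1) (W : Finset (Fin M')) (y : ∀ i, 𝒴 i)
    (w₀ : ∀ i, 𝒵 i) :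
    (∑ z : ∀ i, 𝒵 i, if ∀ i ∈ W, z i = w₀ i then ∏ m, q m (y m) (z m) else 0)
      = ∏ m ∈ W, q m (y m) (w₀ m) := by
  have h1 : ∀ z : ∀ i, 𝒵 i, (if ∀ i ∈ W, z i = w₀ i then ∏ m, q m (y m) (z m) else 0)
      = ∏ m, (if m ∈ W then (if z m = w₀ m then q m (y m) (z m) else 0)
          else q m (y m) (z m)) := by
    intro z
    by_cases h : ∀ i ∈ W, z i = w₀ i
    · rw [if_pos h]
      refine Finset.prod_congr rfl fun m _ => ?_
      by_cases hm : m ∈ W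
      · rw [if_pos hm, if_pos (h m hm)]
      · rw [if_neg hm]
    · rw [if_neg h]
      push_neg at h
      obtain ⟨i, hiW, hne⟩ := h
      refine (Finset.prod_eq_zero (Finset.mem_univ i) ?_).symm
      rw [if_pos hiW, if_neg hne]
  rw [Finset.sum_congr rfl (fun z _ => h1 z),
    sum_prod_q (fun m s => if m ∈ W then (if s = w₀ m then q m (y m) s else 0)
      else q m (y m) s)]
  have h2 : ∀ m : Fin M', (∑ s, if m ∈ W then (if s = w₀ m then q m (y m) s else 0)
      else q m (y m) s) = if m ∈ W then q m (y m) (w₀ m) else 1 := by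
    intro m
    by_cases hm : m ∈ W
    · simp only [if_pos hm]
      rw [Fintype.sum_ite_eq' (w₀ m) (fun s => q m (y m) s)]
    · simp only [if_neg hm]
      exact hq1 m (y m)
  rw [Finset.prod_congr rfl (fun m _ => h2 m), Finset.prod_ite_mem, Finset.univ_inter]

end YZV0


set_option linter.unusedSectionVars false

section YZV1

variable {M' : ℕ} {𝒴 𝒵 : Fin M' → Type*} [∀ i, Fintype (𝒴 i)] [∀ i, Fintype (𝒵 i)]
  {V : Type*} [Fintype V]
  (p' : (∀ i, 𝒴 i) × V → ℝ) (q : ∀ m, 𝒴 m → 𝒵 m → ℝ)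

lemma dist_YZpair_eq (T U : Finset (Fin M')) {j : Fin M'}
    (yo : ∀ i, Option (𝒴 i)) (zo : ∀ i, Option (𝒵 i)) (v : V) (t : 𝒵 j) :
    dist (Pjoint p' q) (fun ω => (YZ T U ω, ω.2.1 j)) ((yo, zo, v), t)
      = ∑ y : ∀ i, 𝒴 i,
          if (fun i => if i ∈ T then some (y i) else none) = yo then
            p' (y, v) * ∑ z : ∀ i, 𝒵 i,
              (if ((fun i => if i ∈ U then some (z i) else none) = zo ∧ z j = t)
                then ∏ m, q m (y m) (z m) else 0)
          else 0 := by
  unfold _root_.dist YZ Pjoint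
  rw [Fintype.sum_prod_type]
  refine Finset.sum_congr rfl fun y _ => ?_
  dsimp only
  rw [Fintype.sum_prod_type]
  dsimp only
  by_cases hy : (fun i => if i ∈ T then some (y i) else none) = yo
  · rw [if_pos hy, Finset.mul_sum]
    refine Finset.sum_congr rfl fun z _ => ?_
    by_cases hz : ((fun i => if i ∈ U then some (z i) else none) = zo ∧ z j = t)
    · rw [if_pos hz]
      refine (Finset.sum_eq_single v
        (fun b _ hb => if_neg fun hcon => hb (congrArg
          (fun w : ((∀ i, Option (𝒴 i)) × (∀ i, Option (𝒵 i)) × V) × 𝒵 j => w.1.2.2) hcon))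
        (fun hv => absurd (Finset.mem_univ v) hv)).trans ?_
      exact if_pos (by rw [hy, hz.1, hz.2])
    · rw [if_neg hz, mul_zero]
      refine Finset.sum_eq_zero fun v' _ => if_neg fun hcon => hz
        ⟨congrArg (fun w : ((∀ i, Option (𝒴 i)) × (∀ i, Option (𝒵 i)) × V) × 𝒵 j => w.1.2.1) hcon,
         congrArg (fun w : ((∀ i, Option (𝒴 i)) × (∀ i, Option (𝒵 i)) × V) × 𝒵 j => w.2) hcon⟩
  · rw [if_neg hy]
    refine Finset.sum_eq_zero fun z _ => Finset.sum_eq_zero fun v' _ => if_neg fun hcon =>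
      hy (congrArg (fun w : ((∀ i, Option (𝒴 i)) × (∀ i, Option (𝒵 i)) × V) × 𝒵 j => w.1.1) hcon)

lemma dist_YZ_eq (T U : Finset (Fin M'))
    (yo : ∀ i, Option (𝒴 i)) (zo : ∀ i, Option (𝒵 i)) (v : V) :
    dist (Pjoint p' q) (YZ T U) (yo, zo, v)
      = ∑ y : ∀ i, 𝒴 i,
          if (fun i => if i ∈ T then some (y i) else none) = yo then
            p' (y, v) * ∑ z : ∀ i, 𝒵 i,
              (if (fun i => if i ∈ U then some (z i) else none) = zo
                then ∏ m, q m (y m) (z m) else 0)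
          else 0 := by
  unfold _root_.dist YZ Pjoint
  rw [Fintype.sum_prod_type]
  refine Finset.sum_congr rfl fun y _ => ?_
  dsimp only
  rw [Fintype.sum_prod_type]
  dsimp only
  by_cases hy : (fun i => if i ∈ T then some (y i) else none) = yo
  · rw [if_pos hy, Finset.mul_sum]
    refine Finset.sum_congr rfl fun z _ => ?_
    by_cases hz : (fun i => if i ∈ U then some (z i) else none) = zo
    · rw [if_pos hz]
      refine (Finset.sum_eq_single v
        (fun b _ hb => if_neg fun hcon => hb (congrArg
          (fun w : (∀ i, Option (𝒴 i)) × (∀ i, Option (𝒵 i)) × V => w.2.2) hcon))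
        (fun hv => absurd (Finset.mem_univ v) hv)).trans ?_
      exact if_pos (by rw [hy, hz])
    · rw [if_neg hz, mul_zero]
      refine Finset.sum_eq_zero fun v' _ => if_neg fun hcon => hz
        (congrArg (fun w : (∀ i, Option (𝒴 i)) × (∀ i, Option (𝒵 i)) × V => w.2.1) hcon)
  · rw [if_neg hy]
    refine Finset.sum_eq_zero fun z _ => Finset.sum_eq_zero fun v' _ => if_neg fun hcon =>
      hy (congrArg (fun w : (∀ i, Option (𝒴 i)) × (∀ i, Option (𝒵 i)) × V => w.1) hcon)

lemma inner_z (hq1 : ∀ m y, ∑ z, q m y z = 1) (U : Finset (Fin M')) {j : Fin M'}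
    (hjU : j ∉ U) (y : ∀ i, 𝒴 i) (zo : ∀ i, Option (𝒵 i)) (t : 𝒵 j) :
    (∑ z : ∀ i, 𝒵 i, if ((fun i => if i ∈ U then some (z i) else none) = zo ∧ z j = t)
        then ∏ m, q m (y m) (z m) else 0)
    = (∑ z : ∀ i, 𝒵 i, if (fun i => if i ∈ U then some (z i) else none) = zo
        then ∏ m, q m (y m) (z m) else 0) * q j (y j) t := by
  by_cases hval : ∃ z₀ : ∀ i, 𝒵 i, (fun i => if i ∈ U then some (z₀ i) else none) = zo
  · obtain ⟨z₀, rfl⟩ := hval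
    have hcond : ∀ z : ∀ i, 𝒵 i,
        ((fun i => if i ∈ U then some (z i) else none)
          = (fun i => if i ∈ U then some (z₀ i) else none)) ↔ ∀ i ∈ U, z i = z₀ i := by
      intro z
      constructor
      · intro h i hi
        have := congrFun h i
        rw [if_pos hi, if_pos hi] at this
        exact Option.some_injective _ this
      · intro h
        funext i
        by_cases hi : i ∈ U
        · rw [if_pos hi, if_pos hi, h i hi]
        · rw [if_neg hi, if_neg hi]
    have hcond2 : ∀ z : ∀ i, 𝒵 i,
        (((fun i => if i ∈ U then some (z i) else none)
            = (fun i => if i ∈ U then some (z₀ i) else none)) ∧ z j = t)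
          ↔ ∀ i ∈ insert j U, z i = (Function.update z₀ j t) i := by
      intro z
      rw [hcond z]
      constructor
      · rintro ⟨h1, h2⟩ i hi
        rcases Finset.mem_insert.mp hi with rfl | hiU
        · rw [Function.update_self]; exact h2
        · rw [Function.update_of_ne (by rintro rfl; exact hjU hiU)]; exact h1 i hiU
      · intro h
        refine ⟨fun i hi => ?_, ?_⟩
        · have := h i (Finset.mem_insert_of_mem hi)
          rwa [Function.update_of_ne (by rintro rfl; exact hjU hi)] at this
        · have := h j (Finset.mem_insert_self j U)
          rwa [Function.update_self] at this
    have lhs_eq : (∑ z : ∀ i, 𝒵 i, if ((fun i => if i ∈ U then some (z i) else none)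
            = (fun i => if i ∈ U then some (z₀ i) else none) ∧ z j = t)
          then ∏ m, q m (y m) (z m) else 0)
        = ∏ m ∈ insert j U, q m (y m) (Function.update z₀ j t m) := by
      rw [← zsum q hq1 (insert j U) y (Function.update z₀ j t)]
      exact Finset.sum_congr rfl fun z _ => if_congr (hcond2 z) rfl rfl
    have rhs_eq : (∑ z : ∀ i, 𝒵 i, if (fun i => if i ∈ U then some (z i) else none)
            = (fun i => if i ∈ U then some (z₀ i) else none)
          then ∏ m, q m (y m) (z m) else 0)
        = ∏ m ∈ U, q m (y m) (z₀ m) := by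
      rw [← zsum q hq1 U y z₀]
      exact Finset.sum_congr rfl fun z _ => if_congr (hcond z) rfl rfl
    rw [lhs_eq, rhs_eq, Finset.prod_insert hjU, Function.update_self]
    rw [show (∏ m ∈ U, q m (y m) (Function.update z₀ j t m)) = ∏ m ∈ U, q m (y m) (z₀ m)
      from Finset.prod_congr rfl fun m hm =>
        by rw [Function.update_of_ne (by rintro rfl; exact hjU hm)]]
    ring
  · have h0 : ∀ z : ∀ i, 𝒵 i,
        ¬ ((fun i => if i ∈ U then some (z i) else none) = zo) := fun z h => hval ⟨z, h⟩
    rw [Finset.sum_eq_zero (fun z _ => if_neg (fun h => h0 z h.1)),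
      Finset.sum_eq_zero (fun z _ => if_neg (h0 z)), zero_mul]

lemma fact_pair (hq1 : ∀ m y, ∑ z, q m y z = 1) [∀ i, Nonempty (𝒴 i)]
    (T U : Finset (Fin M')) {j : Fin M'} (hjT : j ∈ T) (hjU : j ∉ U)
    (a : (∀ i, Option (𝒴 i)) × (∀ i, Option (𝒵 i)) × V) (t : 𝒵 j) :
    dist (Pjoint p' q) (fun ω => (YZ T U ω, ω.2.1 j)) (a, t)
      = dist (Pjoint p' q) (YZ T U) a
          * q j ((a.1 j).getD (Classical.arbitrary _)) t := by
  obtain ⟨yo, zo, v⟩ := a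
  rw [dist_YZpair_eq, dist_YZ_eq, Finset.sum_mul]
  refine Finset.sum_congr rfl fun y _ => ?_
  by_cases hy : (fun i => if i ∈ T then some (y i) else none) = yo
  · rw [if_pos hy, if_pos hy, inner_z q hq1 U hjU y zo t]
    have hyj : ((yo, zo, v).1 j).getD (Classical.arbitrary _) = y j := by
      rw [← hy]
      simp [hjT]
    rw [hyj]
    ring
  · rw [if_neg hy, if_neg hy, zero_mul]

lemma fact0 (hq1 : ∀ m y, ∑ z, q m y z = 1) [∀ i, Nonempty (𝒵 i)]
    {j : Fin M'} (y₀ : 𝒴 j) (t : 𝒵 j) :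
    dist (Pjoint p' q) (fun ω => (ω.1 j, ω.2.1 j)) (y₀, t)
      = dist (Pjoint p' q) (fun ω => ω.1 j) y₀ * q j y₀ t := by
  have hzsum0 : ∀ y : ∀ i, 𝒴 i, (∑ z : ∀ i, 𝒵 i, ∏ m, q m (y m) (z m)) = 1 := by
    intro y
    have := zsum q hq1 ∅ y (fun i => Classical.arbitrary _)
    simpa using this
  have hzsum1 : ∀ y : ∀ i, 𝒴 i,
      (∑ z : ∀ i, 𝒵 i, if z j = t then ∏ m, q m (y m) (z m) else 0) = q j (y j) t := by
    intro y
    have h := zsum q hq1 {j} y (Function.update (fun i => Classical.arbitrary _) j t)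
    rw [Finset.prod_singleton, Function.update_self] at h
    rw [← h]
    refine Finset.sum_congr rfl fun z _ => if_congr ?_ rfl rfl
    constructor
    · intro hz i hi
      rw [Finset.mem_singleton] at hi
      subst hi
      rw [Function.update_self]; exact hz
    · intro hz
      have := hz j (Finset.mem_singleton_self j)
      rwa [Function.update_self] at this
  unfold _root_.dist Pjoint
  rw [Fintype.sum_prod_type, Fintype.sum_prod_type, Finset.sum_mul]
  refine Finset.sum_congr rfl fun y _ => ?_
  dsimp only
  rw [Fintype.sum_prod_type, Fintype.sum_prod_type]
  dsimp only
  by_cases hy : y j = y₀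
  · trans (q j (y j) t * ∑ v' : V, p' (y, v'))
    · rw [Finset.sum_comm, Finset.mul_sum]
      refine Finset.sum_congr rfl fun v' _ => ?_
      conv_rhs => rw [show q j (y j) t * p' (y, v')
        = p' (y, v') * ∑ z : ∀ i, 𝒵 i, (if z j = t then ∏ m, q m (y m) (z m) else 0)
        from by rw [hzsum1 y]; ring]
      rw [Finset.mul_sum]
      refine Finset.sum_congr rfl fun z _ => ?_
      by_cases hz : z j = t
      · rw [if_pos hz, if_pos (show ((y j : 𝒴 j), z j) = (y₀, t) by rw [hy, hz])]
      · rw [if_neg hz, mul_zero,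
          if_neg (fun hcon => hz (congrArg (fun w : 𝒴 j × 𝒵 j => w.2) hcon))]
    · rw [show q j (y j) t = q j y₀ t by rw [hy], mul_comm]
      congr 1
      rw [Finset.sum_comm]
      refine Finset.sum_congr rfl fun v' _ => ?_
      conv_lhs => rw [show (p' (y, v') : ℝ)
        = p' (y, v') * ∑ z : ∀ i, 𝒵 i, ∏ m, q m (y m) (z m) from by rw [hzsum0 y, mul_one]]
      rw [Finset.mul_sum]
      exact Finset.sum_congr rfl fun z _ => (if_pos hy).symm
  · refine Eq.trans (Finset.sum_eq_zero fun z _ => Finset.sum_eq_zero fun v' _ =>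
      if_neg fun hcon => hy (congrArg (fun w : 𝒴 j × 𝒵 j => w.1) hcon)) (Eq.symm ?_)
    rw [Finset.sum_eq_zero (fun z (_ : z ∈ (Finset.univ : Finset (∀ i, 𝒵 i))) =>
      Finset.sum_eq_zero fun v' (_ : v' ∈ (Finset.univ : Finset V)) => if_neg hy), zero_mul]

end YZV1

section YZV2

variable {M' : ℕ} {𝒴 𝒵 : Fin M' → Type*} [∀ i, Fintype (𝒴 i)] [∀ i, Fintype (𝒵 i)]
  {V : Type*} [Fintype V]
  (p' : (∀ i, 𝒴 i) × V → ℝ) (q : ∀ m, 𝒴 m → 𝒵 m → ℝ)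

/-- `H(Y_j, Z_j) - H(Y_j)`, i.e. `H(Z_j | Y_j)`. -/
def hYq (j : Fin M') : ℝ :=
  Hent (Pjoint p' q) (fun ω : Samp 𝒴 𝒵 V => (ω.1 j, ω.2.1 j))
    - Hent (Pjoint p' q) (fun ω : Samp 𝒴 𝒵 V => ω.1 j)

lemma hent_pairZ (T U : Finset (Fin M')) {j : Fin M'} (hjU : j ∉ U) :
    Hent (Pjoint p' q) (YZ (𝒴 := 𝒴) (𝒵 := 𝒵) (V := V) T (insert j U))
      = Hent (Pjoint p' q) (fun ω => (YZ T U ω, ω.2.1 j)) := by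
  refine Hent_congr' _ (fun ω => (YZ T U ω, ω.2.1 j)) _
    (fun a => (a.1.1, Function.update a.1.2.1 j (some a.2), a.1.2.2)) (fun ω => ?_) ?_
  · refine Prod.ext rfl (Prod.ext ?_ rfl)
    funext i
    by_cases hij : i = j
    · subst hij
      simp [YZ, Function.update_self]
    · simp [YZ, Function.update_of_ne hij, Finset.mem_insert, hij]
  · intro ω₁ ω₂ hE
    have hy := congrArg Prod.fst hE
    have hz := congrArg (fun w : (∀ i, Option (𝒴 i)) × (∀ i, Option (𝒵 i)) × V => w.2.1) hE
    have hv := congrArg (fun w : (∀ i, Option (𝒴 i)) × (∀ i, Option (𝒵 i)) × V => w.2.2) hE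
    simp only [YZ] at hy hz hv ⊢
    refine Prod.ext (Prod.ext ?_ (Prod.ext ?_ ?_)) ?_
    · exact hy
    · funext i
      by_cases hiU : i ∈ U
      · have := congrFun hz i
        simp only [Finset.mem_insert, hiU, or_true, if_pos] at this
        simpa [hiU] using this
      · simp [hiU]
    · exact hv
    · have := congrFun hz j
      simp only [Finset.mem_insert_self, if_pos] at this
      simpa using this

lemma hent_R1 [∀ i, Nonempty (𝒴 i)] [∀ i, Nonempty (𝒵 i)] (I : Finset (Fin M')) :
    Hent (Pjoint p' q) (fun ω : Samp 𝒴 𝒵 V => (Ybar I ω, ZbarV Iᶜ ω))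
      = Hent (Pjoint p' q) (YZ I Iᶜ) := by
  refine Hent_congr' _ (YZ I Iᶜ) _
    (fun a => ((fun i : {x // x ∈ I} => (a.1 i.1).getD (Classical.arbitrary _)),
      (fun i : {x // x ∈ Iᶜ} => (a.2.1 i.1).getD (Classical.arbitrary _)), a.2.2))
    (fun ω => ?_) ?_
  · refine Prod.ext ?_ (Prod.ext ?_ rfl)
    · funext i
      simp [YZ, Ybar, i.2]
    · funext i
      simp [YZ, ZbarV, i.2, Finset.mem_compl.mp i.2]
  · intro ω₁ ω₂ hE
    have hy := congrArg Prod.fst hE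
    have hz := congrArg (fun w : (∀ i : {x // x ∈ I}, 𝒴 i.1) ×
      (∀ i : {x // x ∈ Iᶜ}, 𝒵 i.1) × V => w.2.1) hE
    have hv := congrArg (fun w : (∀ i : {x // x ∈ I}, 𝒴 i.1) ×
      (∀ i : {x // x ∈ Iᶜ}, 𝒵 i.1) × V => w.2.2) hE
    simp only [Ybar, ZbarV] at hy hz hv
    refine Prod.ext ?_ (Prod.ext ?_ ?_)
    · funext i
      by_cases hi : i ∈ I
      · simpa [YZ, hi, Ybar] using congrFun hy ⟨i, hi⟩
      · simp [YZ, hi]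
    · funext i
      by_cases hi : i ∈ Iᶜ
      · simpa [YZ, Finset.mem_compl.mp hi] using congrFun hz ⟨i, hi⟩
      · have hiI : i ∈ I := by
          rw [Finset.mem_compl, not_not] at hi
          exact hi
        simp [YZ, hiI]
    · exact hv

lemma hent_R2 [∀ i, Nonempty (𝒴 i)] [∀ i, Nonempty (𝒵 i)] (I : Finset (Fin M')) :
    Hent (Pjoint p' q) (fun ω : Samp 𝒴 𝒵 V => (Zbar I ω, ZbarV Iᶜ ω))
      = Hent (Pjoint p' q) (YZ ∅ Finset.univ) := by
  refine Hent_congr' _ (YZ ∅ Finset.univ) _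
    (fun a => ((fun i : {x // x ∈ I} => (a.2.1 i.1).getD (Classical.arbitrary _)),
      (fun i : {x // x ∈ Iᶜ} => (a.2.1 i.1).getD (Classical.arbitrary _)), a.2.2))
    (fun ω => ?_) ?_
  · refine Prod.ext ?_ (Prod.ext ?_ rfl)
    · funext i
      simp [YZ, Zbar]
    · funext i
      simp [YZ, ZbarV]
  · intro ω₁ ω₂ hE
    have hz1 := congrArg Prod.fst hE
    have hz2 := congrArg (fun w : (∀ i : {x // x ∈ I}, 𝒵 i.1) ×
      (∀ i : {x // x ∈ Iᶜ}, 𝒵 i.1) × V => w.2.1) hE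
    have hv := congrArg (fun w : (∀ i : {x // x ∈ I}, 𝒵 i.1) ×
      (∀ i : {x // x ∈ Iᶜ}, 𝒵 i.1) × V => w.2.2) hE
    simp only [Zbar, ZbarV] at hz1 hz2 hv
    refine Prod.ext ?_ (Prod.ext ?_ ?_)
    · funext i; simp [YZ]
    · funext i
      by_cases hi : i ∈ I
      · simpa [YZ, Zbar] using congrFun hz1 ⟨i, hi⟩
      · simpa [YZ] using congrFun hz2 ⟨i, Finset.mem_compl.2 hi⟩
    · exact hv

lemma hent_R3 [∀ i, Nonempty (𝒴 i)] [∀ i, Nonempty (𝒵 i)] (I : Finset (Fin M')) :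
    Hent (Pjoint p' q) (fun ω : Samp 𝒴 𝒵 V => (Ybar I ω, Zbar I ω, ZbarV Iᶜ ω))
      = Hent (Pjoint p' q) (YZ I Finset.univ) := by
  refine Hent_congr' _ (YZ I Finset.univ) _
    (fun a => ((fun i : {x // x ∈ I} => (a.1 i.1).getD (Classical.arbitrary _)),
      (fun i : {x // x ∈ I} => (a.2.1 i.1).getD (Classical.arbitrary _)),
      (fun i : {x // x ∈ Iᶜ} => (a.2.1 i.1).getD (Classical.arbitrary _)), a.2.2))
    (fun ω => ?_) ?_
  · refine Prod.ext ?_ (Prod.ext ?_ (Prod.ext ?_ rfl))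
    · funext i
      simp [YZ, Ybar, i.2]
    · funext i
      simp [YZ, Zbar]
    · funext i
      simp [YZ, ZbarV]
  · intro ω₁ ω₂ hE
    have hy := congrArg Prod.fst hE
    have hz1 := congrArg (fun w : (∀ i : {x // x ∈ I}, 𝒴 i.1) ×
      (∀ i : {x // x ∈ I}, 𝒵 i.1) × (∀ i : {x // x ∈ Iᶜ}, 𝒵 i.1) × V => w.2.1) hE
    have hz2 := congrArg (fun w : (∀ i : {x // x ∈ I}, 𝒴 i.1) ×
      (∀ i : {x // x ∈ I}, 𝒵 i.1) × (∀ i : {x // x ∈ Iᶜ}, 𝒵 i.1) × V => w.2.2.1) hE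
    have hv := congrArg (fun w : (∀ i : {x // x ∈ I}, 𝒴 i.1) ×
      (∀ i : {x // x ∈ I}, 𝒵 i.1) × (∀ i : {x // x ∈ Iᶜ}, 𝒵 i.1) × V => w.2.2.2) hE
    simp only [Ybar, Zbar, ZbarV] at hy hz1 hz2 hv
    refine Prod.ext ?_ (Prod.ext ?_ ?_)
    · funext i
      by_cases hi : i ∈ I
      · simpa [YZ, hi, Ybar] using congrFun hy ⟨i, hi⟩
      · simp [YZ, hi]
    · funext i
      by_cases hi : i ∈ I
      · simpa [YZ, Zbar] using congrFun hz1 ⟨i, hi⟩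
      · simpa [YZ] using congrFun hz2 ⟨i, Finset.mem_compl.2 hi⟩
    · exact hv

lemma hent_R4 [∀ i, Nonempty (𝒴 i)] [∀ i, Nonempty (𝒵 i)] (A : Finset (Fin M')) :
    Hent (Pjoint p' q) (ZbarV (𝒴 := 𝒴) (𝒵 := 𝒵) (V := V) A)
      = Hent (Pjoint p' q) (YZ ∅ A) := by
  refine Hent_congr' _ (YZ ∅ A) _
    (fun a => ((fun i : {x // x ∈ A} => (a.2.1 i.1).getD (Classical.arbitrary _)), a.2.2))
    (fun ω => ?_) ?_
  · refine Prod.ext ?_ rfl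
    funext i
    simp [YZ, ZbarV, i.2]
  · intro ω₁ ω₂ hE
    have hz := congrArg Prod.fst hE
    have hv := congrArg (fun w : (∀ i : {x // x ∈ A}, 𝒵 i.1) × V => w.2) hE
    simp only [ZbarV] at hz hv
    refine Prod.ext ?_ (Prod.ext ?_ ?_)
    · funext i; simp [YZ]
    · funext i
      by_cases hi : i ∈ A
      · simpa [YZ, hi] using congrFun hz ⟨i, hi⟩
      · simp [YZ, hi]
    · exact hv

lemma hent_R5 [∀ i, Nonempty (𝒴 i)] [∀ i, Nonempty (𝒵 i)] (A : Finset (Fin M')) (j : Fin M') :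
    Hent (Pjoint p' q) (fun ω : Samp 𝒴 𝒵 V => (ω.1 j, ZbarV A ω))
      = Hent (Pjoint p' q) (YZ {j} A) := by
  refine Hent_congr' _ (YZ {j} A) _
    (fun a => ((a.1 j).getD (Classical.arbitrary _),
      (fun i : {x // x ∈ A} => (a.2.1 i.1).getD (Classical.arbitrary _)), a.2.2))
    (fun ω => ?_) ?_
  · refine Prod.ext ?_ (Prod.ext ?_ rfl)
    · simp [YZ]
    · funext i
      simp [YZ, ZbarV, i.2]
  · intro ω₁ ω₂ hE
    have hy := congrArg Prod.fst hE
    have hz := congrArg (fun w : 𝒴 j × (∀ i : {x // x ∈ A}, 𝒵 i.1) × V => w.2.1) hE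
    have hv := congrArg (fun w : 𝒴 j × (∀ i : {x // x ∈ A}, 𝒵 i.1) × V => w.2.2) hE
    simp only [ZbarV] at hy hz hv
    refine Prod.ext ?_ (Prod.ext ?_ ?_)
    · funext i
      by_cases hi : i ∈ ({j} : Finset (Fin M'))
      · rw [Finset.mem_singleton] at hi
        subst hi
        simpa [YZ] using hy
      · have hne : i ≠ j := fun h => hi (by simp [h])
        simp [YZ, hne]
    · funext i
      by_cases hi : i ∈ A
      · simpa [YZ, hi] using congrFun hz ⟨i, hi⟩
      · simp [YZ, hi]
    · exact hv

lemma hent_R6 [∀ i, Nonempty (𝒴 i)] [∀ i, Nonempty (𝒵 i)] (A : Finset (Fin M')) (j : Fin M') :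
    Hent (Pjoint p' q) (fun ω : Samp 𝒴 𝒵 V => (ω.2.1 j, ZbarV A ω))
      = Hent (Pjoint p' q) (YZ ∅ (insert j A)) := by
  refine Hent_congr' _ (YZ ∅ (insert j A)) _
    (fun a => ((a.2.1 j).getD (Classical.arbitrary _),
      (fun i : {x // x ∈ A} => (a.2.1 i.1).getD (Classical.arbitrary _)), a.2.2))
    (fun ω => ?_) ?_
  · refine Prod.ext ?_ (Prod.ext ?_ rfl)
    · simp [YZ]
    · funext i
      simp [YZ, ZbarV, Finset.mem_insert_of_mem i.2]
  · intro ω₁ ω₂ hE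
    have hzj := congrArg Prod.fst hE
    have hz := congrArg (fun w : 𝒵 j × (∀ i : {x // x ∈ A}, 𝒵 i.1) × V => w.2.1) hE
    have hv := congrArg (fun w : 𝒵 j × (∀ i : {x // x ∈ A}, 𝒵 i.1) × V => w.2.2) hE
    simp only [ZbarV] at hzj hz hv
    refine Prod.ext ?_ (Prod.ext ?_ ?_)
    · funext i; simp [YZ]
    · funext i
      by_cases hi : i ∈ insert j A
      · rcases Finset.mem_insert.mp hi with rfl | hiA
        · simpa [YZ] using hzj
        · simpa [YZ, hiA] using congrFun hz ⟨i, hiA⟩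
      · rw [Finset.mem_insert] at hi
        push_neg at hi
        simp [YZ, hi.1, hi.2]
    · exact hv

lemma hent_R7 [∀ i, Nonempty (𝒴 i)] [∀ i, Nonempty (𝒵 i)] (A : Finset (Fin M')) (j : Fin M') :
    Hent (Pjoint p' q) (fun ω : Samp 𝒴 𝒵 V => (ω.1 j, ω.2.1 j, ZbarV A ω))
      = Hent (Pjoint p' q) (YZ {j} (insert j A)) := by
  refine Hent_congr' _ (YZ {j} (insert j A)) _
    (fun a => ((a.1 j).getD (Classical.arbitrary _), (a.2.1 j).getD (Classical.arbitrary _),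
      (fun i : {x // x ∈ A} => (a.2.1 i.1).getD (Classical.arbitrary _)), a.2.2))
    (fun ω => ?_) ?_
  · refine Prod.ext ?_ (Prod.ext ?_ (Prod.ext ?_ rfl))
    · simp [YZ]
    · simp [YZ]
    · funext i
      simp [YZ, ZbarV, Finset.mem_insert_of_mem i.2]
  · intro ω₁ ω₂ hE
    have hy := congrArg Prod.fst hE
    have hzj := congrArg (fun w : 𝒴 j × 𝒵 j × (∀ i : {x // x ∈ A}, 𝒵 i.1) × V => w.2.1) hE
    have hz := congrArg (fun w : 𝒴 j × 𝒵 j × (∀ i : {x // x ∈ A}, 𝒵 i.1) × V => w.2.2.1) hE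
    have hv := congrArg (fun w : 𝒴 j × 𝒵 j × (∀ i : {x // x ∈ A}, 𝒵 i.1) × V => w.2.2.2) hE
    simp only [ZbarV] at hy hzj hz hv
    refine Prod.ext ?_ (Prod.ext ?_ ?_)
    · funext i
      by_cases hi : i ∈ ({j} : Finset (Fin M'))
      · rw [Finset.mem_singleton] at hi
        subst hi
        simpa [YZ] using hy
      · have hne : i ≠ j := fun h => hi (by simp [h])
        simp [YZ, hne]
    · funext i
      by_cases hi : i ∈ insert j A
      · rcases Finset.mem_insert.mp hi with rfl | hiA
        · simpa [YZ] using hzj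
        · simpa [YZ, hiA] using congrFun hz ⟨i, hiA⟩
      · rw [Finset.mem_insert] at hi
        push_neg at hi
        simp [YZ, hi.1, hi.2]
    · exact hv

end YZV2

section YZV3

variable {M' : ℕ} {𝒴 𝒵 : Fin M' → Type*} [∀ i, Fintype (𝒴 i)] [∀ i, Fintype (𝒵 i)]
  {V : Type*} [Fintype V]
  (p' : (∀ i, 𝒴 i) × V → ℝ) (q : ∀ m, 𝒴 m → 𝒵 m → ℝ)

lemma Mstep (hq1 : ∀ m y, ∑ z, q m y z = 1) [∀ i, Nonempty (𝒴 i)] [∀ i, Nonempty (𝒵 i)]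
    {T U : Finset (Fin M')} {j : Fin M'} (hjT : j ∈ T) (hjU : j ∉ U) :
    Hent (Pjoint p' q) (YZ (𝒴 := 𝒴) (𝒵 := 𝒵) (V := V) T (insert j U))
      = Hent (Pjoint p' q) (YZ T U) + hYq p' q j := by
  rw [hent_pairZ p' q T U hjU]
  rw [chain (Pjoint p' q) (YZ T U) (fun ω => ω.2.1 j)
    (fun a t => q j ((a.1 j).getD (Classical.arbitrary _)) t)
    (fun a t => fact_pair p' q hq1 T U hjT hjU a t)]
  congr 1
  have e1 := exp_comp (Pjoint p' q) (YZ (𝒴 := 𝒴) (𝒵 := 𝒵) (V := V) T U)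
    (fun a => (a.1 j).getD (Classical.arbitrary _))
    (fun y => -(∑ t, q j y t * Real.logb 2 (q j y t)))
  rw [show (fun ω => ((YZ (𝒴 := 𝒴) (𝒵 := 𝒵) (V := V) T U ω).1 j).getD (Classical.arbitrary _))
      = (fun ω : Samp 𝒴 𝒵 V => ω.1 j) from funext fun ω => by simp [YZ, hjT]] at e1
  rw [← e1]
  have e2 := chain (Pjoint p' q) (fun ω : Samp 𝒴 𝒵 V => ω.1 j) (fun ω => ω.2.1 j) (q j)
    (fun y t => fact0 p' q hq1 y t)
  unfold hYq
  rw [e2]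
  ring

lemma Mb (hq1 : ∀ m y, ∑ z, q m y z = 1) [∀ i, Nonempty (𝒴 i)] [∀ i, Nonempty (𝒵 i)]
    (S : Finset (Fin M')) :
    Hent (Pjoint p' q) (YZ (𝒴 := 𝒴) (𝒵 := 𝒵) (V := V) S Finset.univ)
      = Hent (Pjoint p' q) (YZ S Sᶜ) + ∑ i ∈ S, hYq p' q i := by
  have aux : ∀ W : Finset (Fin M'), W ⊆ S →
      Hent (Pjoint p' q) (YZ (𝒴 := 𝒴) (𝒵 := 𝒵) (V := V) S (Sᶜ ∪ W))
        = Hent (Pjoint p' q) (YZ S Sᶜ) + ∑ i ∈ W, hYq p' q i := by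
    intro W
    induction W using Finset.induction_on with
    | empty => intro _; simp
    | @insert a W' haW' ih =>
      intro hsub
      have haS : a ∈ S := hsub (Finset.mem_insert_self a W')
      have hnomem : a ∉ Sᶜ ∪ W' := by
        rw [Finset.mem_union]
        rintro (h | h)
        · exact (Finset.mem_compl.mp h) haS
        · exact haW' h
      rw [Finset.union_insert, Mstep p' q hq1 haS hnomem,
        ih (fun x hx => hsub (Finset.mem_insert_of_mem hx)), Finset.sum_insert haW']
      ring
  have h := aux S (Finset.Subset.refl S)
  rwa [show Sᶜ ∪ S = Finset.univ from by rw [Finset.union_comm, Finset.union_compl]] at h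

lemma Ff (hq1 : ∀ m y, ∑ z, q m y z = 1) [∀ i, Nonempty (𝒴 i)] [∀ i, Nonempty (𝒵 i)]
    (I : Finset (Fin M')) :
    condMI (Pjoint p' q) (Ybar (𝒴 := 𝒴) (𝒵 := 𝒵) (V := V) I) (Zbar I) (ZbarV Iᶜ)
      = Hent (Pjoint p' q) (YZ (𝒴 := 𝒴) (𝒵 := 𝒵) (V := V) ∅ Finset.univ)
        - Hent (Pjoint p' q) (YZ ∅ Iᶜ) - ∑ i ∈ I, hYq p' q i := by
  unfold condMI
  rw [hent_R1 p' q I, hent_R2 p' q I, hent_R3 p' q I, hent_R4 p' q Iᶜ,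
    Mb p' q hq1 I]
  ring

lemma Rf (hq1 : ∀ m y, ∑ z, q m y z = 1) [∀ i, Nonempty (𝒴 i)] [∀ i, Nonempty (𝒵 i)]
    {j : Fin M'} {A : Finset (Fin M')} (hjA : j ∉ A) :
    condMI (Pjoint p' q) (fun ω : Samp 𝒴 𝒵 V => ω.1 j) (fun ω => ω.2.1 j) (ZbarV A)
      = Hent (Pjoint p' q) (YZ (𝒴 := 𝒴) (𝒵 := 𝒵) (V := V) ∅ (insert j A))
        - Hent (Pjoint p' q) (YZ ∅ A) - hYq p' q j := by
  unfold condMI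
  rw [hent_R5 p' q A j, hent_R6 p' q A j, hent_R7 p' q A j, hent_R4 p' q A,
    Mstep p' q hq1 (Finset.mem_singleton_self j) hjA]
  ring

end YZV3

open scoped Pointwise

lemma abel_nonneg (n : ℕ) (c a : ℕ → ℝ) (hmono : ∀ k, k + 1 < n → c (k + 1) ≤ c k)
    (hc0 : ∀ k, k < n → 0 ≤ c k)
    (hpart : ∀ m, m ≤ n → 0 ≤ ∑ k ∈ Finset.range m, a k) :
    0 ≤ ∑ k ∈ Finset.range n, c k * a k := by
  have key : ∀ m, m < n → c m * (∑ k ∈ Finset.range (m + 1), a k)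
      ≤ ∑ k ∈ Finset.range (m + 1), c k * a k := by
    intro m
    induction m with
    | zero => intro _; simp
    | succ m ih =>
      intro hm
      have hm' : m < n := Nat.lt_of_succ_lt hm
      rw [Finset.sum_range_succ, Finset.sum_range_succ (f := fun k => c k * a k)]
      have h1 := ih hm'
      have h2 : c (m + 1) ≤ c m := hmono m hm
      have h3 : 0 ≤ ∑ k ∈ Finset.range (m + 1), a k := hpart (m + 1) (le_of_lt hm)
      nlinarith [mul_le_mul_of_nonneg_right h2 h3]
  rcases Nat.eq_zero_or_pos n with rfl | hn
  · simp
  · have hsub : n - 1 < n := Nat.sub_lt hn one_pos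
    have hlast := key (n - 1) hsub
    rw [Nat.sub_add_cancel hn] at hlast
    have := mul_nonneg (hc0 (n - 1) hsub) (hpart n (le_refl n))
    linarith

open scoped Pointwise in
lemma _pointwise_marker : True := trivial

lemma image_perm_compl {n : ℕ} (σ : Equiv.Perm (Fin n)) (s : Finset (Fin n)) :
    (s.image σ)ᶜ = sᶜ.image σ := by
  ext x
  simp only [Finset.mem_compl, Finset.mem_image]
  constructor
  · intro h
    exact ⟨σ.symm x, fun hmem => h ⟨σ.symm x, hmem, Equiv.apply_symm_apply σ x⟩,
      Equiv.apply_symm_apply σ x⟩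
  · rintro ⟨y, hy, rfl⟩ ⟨y', hy', heq⟩
    exact hy (by rwa [σ.injective heq] at hy')

/-- Equation (4.6) of the paper: every `R' ∈ B*` dominates a convex combination of the
`M'!` corner points `R'^{*(π)}`, where `R'^{*(π)}_{π(i)} = I(Y_{π(i)}; Z_{π(i)} |
Z̄_{π({1,…,i−1})}, V)`. -/
theorem statement_2 (M' : ℕ) (𝒴 𝒵 : Fin M' → Type) [∀ i, Fintype (𝒴 i)]
    [∀ i, Fintype (𝒵 i)] (V : Type) [Fintype V]
    (p' : (∀ i, 𝒴 i) × V → ℝ) (q : ∀ m, 𝒴 m → 𝒵 m → ℝ)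
    (hp'0 : ∀ yv, 0 ≤ p' yv) (hp'1 : ∑ yv, p' yv = 1)
    (hq0 : ∀ m y z, 0 ≤ q m y z) (hq1 : ∀ m y, ∑ z, q m y z = 1)
    (Rstar : Equiv.Perm (Fin M') → Fin M' → ℝ)
    (hRstar : ∀ (π : Equiv.Perm (Fin M')) (i : Fin M'),
      Rstar π (π i) = condMI (Pjoint p' q)
        (fun ω : Samp 𝒴 𝒵 V => ω.1 (π i))
        (fun ω : Samp 𝒴 𝒵 V => ω.2.1 (π i))
        (ZbarV ((Finset.univ.filter fun j : Fin M' => j < i).image π)))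
    (R : Fin M' → ℝ) (hR : memBstar p' q R) :
    ∃ lam : Equiv.Perm (Fin M') → ℝ,
      (∀ π, 0 ≤ lam π) ∧ (∑ π, lam π = 1) ∧
        ∀ i : Fin M', ∑ π, lam π * Rstar π i ≤ R i := by
  classical
  -- derive nonemptiness
  have hneYV : Nonempty ((∀ i, 𝒴 i) × V) := by
    by_contra h
    rw [not_nonempty_iff] at h
    rw [Finset.univ_eq_empty, Finset.sum_empty] at hp'1
    exact one_ne_zero hp'1.symm
  obtain ⟨⟨y0, v0⟩⟩ := hneYV
  haveI hNY : ∀ i, Nonempty (𝒴 i) := fun i => ⟨y0 i⟩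
  haveI hNZ : ∀ i, Nonempty (𝒵 i) := fun i => by
    by_contra h
    rw [not_nonempty_iff] at h
    have h1 := hq1 i (y0 i)
    rw [Finset.univ_eq_empty, Finset.sum_empty] at h1
    exact one_ne_zero h1.symm
  rcases Nat.eq_zero_or_pos M' with hM0 | hMpos
  · subst hM0
    refine ⟨fun π => if π = 1 then 1 else 0, fun π => by dsimp only; split <;> norm_num, by simp, ?_⟩
    intro i
    exact i.elim0
  set P := Pjoint p' q with hP
  by_contra hcon
  set Csc : Set (Fin M' → ℝ) := {x | ∃ lam : Equiv.Perm (Fin M') → ℝ,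
      (∀ π, 0 ≤ lam π) ∧ (∑ π, lam π = 1) ∧ ∀ i, (∑ π, lam π * Rstar π i) ≤ x i} with hCdef
  have hRC : R ∉ Csc := fun ⟨lam, h1, h2, h3⟩ => hcon ⟨lam, h1, h2, h3⟩
  have hconv : Convex ℝ Csc := by
    rintro x ⟨lx, hlx0, hlx1, hlx⟩ y ⟨ly, hly0, hly1, hly⟩ a b ha hb hab
    refine ⟨fun π => a * lx π + b * ly π,
      fun π => by have := hlx0 π; have := hly0 π; positivity, ?_, ?_⟩
    · rw [Finset.sum_add_distrib, ← Finset.mul_sum, ← Finset.mul_sum, hlx1, hly1]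
      linarith
    · intro i
      have he : ∑ π, (a * lx π + b * ly π) * Rstar π i
          = a * (∑ π, lx π * Rstar π i) + b * (∑ π, ly π * Rstar π i) := by
        rw [Finset.mul_sum, Finset.mul_sum, ← Finset.sum_add_distrib]
        exact Finset.sum_congr rfl fun π _ => by ring
      rw [he]
      have h1 : a * (∑ π, lx π * Rstar π i) ≤ a * x i :=
        mul_le_mul_of_nonneg_left (hlx i) ha
      have h2 : b * (∑ π, ly π * Rstar π i) ≤ b * y i :=
        mul_le_mul_of_nonneg_left (hly i) hb
      have : (a • x + b • y) i = a * x i + b * y i := rfl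
      rw [this]
      linarith
  have hclosed : IsClosed Csc := by
    have hK : IsCompact ((fun lam : Equiv.Perm (Fin M') → ℝ =>
        (fun i => ∑ π, lam π * Rstar π i : Fin M' → ℝ)) ''
          stdSimplex ℝ (Equiv.Perm (Fin M'))) := by
      apply IsCompact.image (isCompact_stdSimplex _ _)
      refine continuous_pi fun i => ?_
      exact continuous_finset_sum _ fun π _ => ((continuous_apply π).mul continuous_const)
    have hO : IsClosed {x : Fin M' → ℝ | ∀ i, 0 ≤ x i} := by
      have : {x : Fin M' → ℝ | ∀ i, 0 ≤ x i} = Set.Ici (0 : Fin M' → ℝ) := by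
        ext x
        simp [Set.mem_Ici, Pi.le_def]
      rw [this]
      exact isClosed_Ici
    have hdecomp : Csc = ((fun lam : Equiv.Perm (Fin M') → ℝ =>
        (fun i => ∑ π, lam π * Rstar π i : Fin M' → ℝ)) ''
          stdSimplex ℝ (Equiv.Perm (Fin M'))) + {x : Fin M' → ℝ | ∀ i, 0 ≤ x i} := by
      ext x
      constructor
      · rintro ⟨lam, h0, h1, h2⟩
        refine Set.mem_add.2 ⟨(fun i => ∑ π, lam π * Rstar π i), ⟨lam, ⟨h0, h1⟩, rfl⟩,
          (fun i => x i - ∑ π, lam π * Rstar π i), fun i => by have := h2 i; simp; linarith, ?_⟩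
        funext i
        simp
      · intro hx
        obtain ⟨yv, ⟨lam, hmem, rfl⟩, o, ho, rfl⟩ := Set.mem_add.1 hx
        exact ⟨lam, hmem.1, hmem.2, fun i => by have := ho i; simp at this ⊢; linarith⟩
    rw [hdecomp]
    exact hO.add_left_of_isCompact hK
  obtain ⟨f, u, hfu, hsep⟩ := geometric_hahn_banach_point_closed hconv hclosed hRC
  set c : Fin M' → ℝ := fun i => f (Pi.single i 1) with hc
  have hflin : ∀ y : Fin M' → ℝ, f y = ∑ i, y i * c i := by
    intro y
    have hy : y = ∑ i, Pi.single i (y i) := by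
      funext j
      rw [Finset.sum_apply]
      exact (Fintype.sum_pi_single j y).symm
    conv_lhs => rw [hy]
    rw [map_sum]
    refine Finset.sum_congr rfl fun i _ => ?_
    have hsingle : (Pi.single i (y i) : Fin M' → ℝ)
        = (y i) • (Pi.single i (1 : ℝ) : Fin M' → ℝ) := by
      rw [← Pi.single_smul, smul_eq_mul, mul_one]
    rw [hsingle, map_smul, smul_eq_mul]
  have hbase : ∀ τ : Equiv.Perm (Fin M'), (Rstar τ) ∈ Csc := by
    intro τ
    refine ⟨fun π => if π = τ then 1 else 0, fun π => by dsimp only; split <;> norm_num, by simp, fun i => ?_⟩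
    simp only [ite_mul, one_mul, zero_mul]
    rw [Fintype.sum_ite_eq' τ (fun π => Rstar π i)]
  have hc0 : ∀ i, 0 ≤ c i := by
    intro i
    by_contra hneg
    push_neg at hneg
    have hbR := hsep _ (hbase 1)
    set t : ℝ := (f (Rstar 1) - u) / (-(c i)) + 1 with ht
    have htpos : 0 < t := by
      have h1 : 0 < -(c i) := by linarith
      have h2 : 0 < f (Rstar 1) - u := by linarith
      positivity
    have hmem : (fun k => Rstar 1 k + t * (if k = i then 1 else 0)) ∈ Csc := by
      refine ⟨fun π => if π = 1 then 1 else 0, fun π => by dsimp only; split <;> norm_num, by simp,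
        fun k => ?_⟩
      simp only [ite_mul, one_mul, zero_mul]
      rw [Fintype.sum_ite_eq' 1 (fun π => Rstar π k)]
      have : 0 ≤ t * (if k = i then 1 else 0) := by
        split <;> [linarith; simp]
      linarith
    have hfval : f (fun k => Rstar 1 k + t * (if k = i then 1 else 0))
        = f (Rstar 1) + t * c i := by
      rw [hflin, hflin]
      have expand : ∀ k : Fin M', (Rstar 1 k + t * (if k = i then 1 else 0)) * c k
          = Rstar 1 k * c k + (if k = i then t * c k else 0) := by
        intro k; split <;> ring
      rw [Finset.sum_congr rfl (fun k _ => expand k), Finset.sum_add_distrib,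
        Fintype.sum_ite_eq' i (fun k => t * c k)]
    have hlt := hsep _ hmem
    rw [hfval] at hlt
    have hci : c i ≠ 0 := ne_of_lt hneg
    have hcine : -(c i) ≠ 0 := by
      intro h
      exact hci (by linarith [neg_eq_zero.mp h])
    have htci : t * (-(c i)) = (f (Rstar 1) - u) + (-(c i)) := by
      rw [ht]
      field_simp
      ring
    linarith
  -- sorting permutation, decreasing c
  set σ : Equiv.Perm (Fin M') := Tuple.sort (fun k => -(c k)) with hσ
  have hsort : ∀ k l : Fin M', k ≤ l → c (σ l) ≤ c (σ k) := by
    intro k l hkl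
    have := Tuple.monotone_sort (fun k => -(c k)) hkl
    simpa [hσ] using this
  set τ : Equiv.Perm (Fin M') := Fin.revPerm.trans σ with hτ
  set K : ℕ → Fin M' := fun m => ⟨m % M', Nat.mod_lt m hMpos⟩ with hKdef
  have hKlt : ∀ m, m < M' → ((K m : Fin M') : ℕ) = m := fun m hm => Nat.mod_eq_of_lt hm
  set G : ℕ → Finset (Fin M') :=
    fun m => (Finset.univ.filter fun j : Fin M' => (j : ℕ) < m).image σ with hG
  have hG0 : G 0 = ∅ := by simp [hG]
  have hGsucc : ∀ m, m < M' → G (m + 1) = insert (σ (K m)) (G m) := by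
    intro m hm
    ext x
    simp only [hG, Finset.mem_image, Finset.mem_filter, Finset.mem_univ, true_and,
      Finset.mem_insert]
    constructor
    · rintro ⟨j, hj, rfl⟩
      rcases Nat.lt_succ_iff_lt_or_eq.mp hj with h | h
      · exact Or.inr ⟨j, h, rfl⟩
      · exact Or.inl (by rw [show j = K m from Fin.ext (by rw [hKlt m hm]; exact h)])
    · rintro (rfl | ⟨j, hj, rfl⟩)
      · exact ⟨K m, by rw [hKlt m hm]; exact Nat.lt_succ_self m, rfl⟩
      · exact ⟨j, Nat.lt_succ_of_lt hj, rfl⟩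
  have hnotmem : ∀ m, m < M' → σ (K m) ∉ G m := by
    intro m hm
    simp only [hG, Finset.mem_image, Finset.mem_filter, Finset.mem_univ, true_and]
    rintro ⟨j, hj, hje⟩
    have : j = K m := σ.injective hje
    subst this
    rw [hKlt m hm] at hj
    exact lt_irrefl m hj
  have hmemG : ∀ m, m < M' → σ (K m) ∈ G (m + 1) := by
    intro m hm
    rw [hGsucc m hm]
    exact Finset.mem_insert_self _ _
  -- the conditioning set of `hRstar` for τ at (K m).rev equals (G (m+1))ᶜ
  have hAset : ∀ m, m < M' →
      ((Finset.univ.filter fun j : Fin M' => j < (K m).rev).image τ) = (G (m + 1))ᶜ := by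
    intro m hm
    have h1 : ((Finset.univ.filter fun j : Fin M' => j < (K m).rev).image τ)
        = ((Finset.univ.filter fun j : Fin M' => j < (K m).rev).image Fin.revPerm).image σ := by
      rw [Finset.image_image]
      rfl
    have h2 : ((Finset.univ.filter fun j : Fin M' => j < (K m).rev).image Fin.revPerm)
        = Finset.univ.filter fun j : Fin M' => K m < j := by
      ext x
      simp only [Finset.mem_image, Finset.mem_filter, Finset.mem_univ, true_and,
        Fin.revPerm_apply]
      constructor
      · rintro ⟨j, hj, rfl⟩
        have : Fin.rev (Fin.rev (K m)) < Fin.rev j := Fin.rev_lt_rev.mpr hj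
        rwa [Fin.rev_rev] at this
      · intro hx
        exact ⟨Fin.rev x, Fin.rev_lt_rev.mpr hx, Fin.rev_rev x⟩
    have h3 : (G (m + 1))ᶜ = (Finset.univ.filter fun j : Fin M' => K m < j).image σ := by
      rw [hG]
      rw [image_perm_compl σ]
      congr 1
      rw [Finset.compl_filter]
      refine Finset.filter_congr fun j _ => ?_
      rw [not_lt, Fin.lt_def, hKlt m hm]
      exact ⟨fun h => Nat.lt_of_succ_le h, fun h => Nat.succ_le_of_lt h⟩
    rw [h1, h2, h3]
  have htauval : ∀ m, m < M' → τ ((K m).rev) = σ (K m) := by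
    intro m hm
    rw [hτ]
    simp [Fin.rev_rev]
  -- telescoping
  have htel : ∀ m, m ≤ M' →
      (∑ k ∈ Finset.range m, Rstar τ (σ (K k)))
        = Hent P (YZ (𝒴 := 𝒴) (𝒵 := 𝒵) (V := V) ∅ Finset.univ)
          - Hent P (YZ ∅ (G m)ᶜ) - ∑ i ∈ G m, hYq p' q i := by
    intro m
    induction m with
    | zero =>
      intro _
      simp [hG0, Finset.compl_empty]
    | succ m ih =>
      intro hm1
      have hm : m < M' := Nat.lt_of_succ_le hm1
      rw [Finset.sum_range_succ, ih (le_of_lt hm)]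
      have h1 := hRstar τ ((K m).rev)
      rw [htauval m hm, hAset m hm] at h1
      have hjA : σ (K m) ∉ (G (m + 1))ᶜ := by
        rw [Finset.mem_compl, not_not]
        exact hmemG m hm
      rw [h1, hP, Rf p' q hq1 hjA]
      have hins : insert (σ (K m)) ((G (m + 1))ᶜ) = (G m)ᶜ := by
        rw [hGsucc m hm, Finset.compl_insert,
          Finset.insert_erase (Finset.mem_compl.mpr (hnotmem m hm))]
      rw [hins, hGsucc m hm, Finset.sum_insert (hnotmem m hm)]
      ring
  -- partial sums of R over chains
  have hRsum : ∀ m, m ≤ M' →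
      (∑ k ∈ Finset.range m, R (σ (K k))) = ∑ i ∈ G m, R i := by
    intro m
    induction m with
    | zero => intro _; simp [hG0]
    | succ m ih =>
      intro hm1
      have hm : m < M' := Nat.lt_of_succ_le hm1
      rw [Finset.sum_range_succ, ih (le_of_lt hm), hGsucc m hm,
        Finset.sum_insert (hnotmem m hm)]
      ring
  -- the constraint bound on partial sums
  have hcons : ∀ m, 1 ≤ m → m ≤ M' →
      (∑ k ∈ Finset.range m, Rstar τ (σ (K k))) ≤ ∑ k ∈ Finset.range m, R (σ (K k)) := by
    intro m hm1 hm2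
    rw [htel m hm2, hRsum m hm2]
    have hne : (G m).Nonempty := by
      refine ⟨σ (K 0), ?_⟩
      simp only [hG, Finset.mem_image, Finset.mem_filter, Finset.mem_univ, true_and]
      exact ⟨K 0, by rw [hKlt 0 hMpos]; exact hm1, rfl⟩
    have := hR (G m) hne
    rw [Ff p' q hq1 (G m)] at this
    exact this
  -- Abel summation
  have habel : 0 ≤ ∑ k ∈ Finset.range M',
      (c (σ (K k))) * (R (σ (K k)) - Rstar τ (σ (K k))) := by
    refine abel_nonneg M' _ _ ?_ ?_ ?_
    · intro k hk
      refine hsort (K k) (K (k + 1)) ?_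
      rw [Fin.le_def, hKlt k (Nat.lt_of_succ_lt hk), hKlt (k + 1) hk]
      exact Nat.le_succ k
    · intro k _
      exact hc0 _
    · intro m hm
      rw [Finset.sum_sub_distrib, sub_nonneg]
      rcases Nat.eq_zero_or_pos m with rfl | hm1
      · simp
      · exact hcons m hm1 hm
  have hre : (∑ k ∈ Finset.range M', (c (σ (K k))) * (R (σ (K k)) - Rstar τ (σ (K k))))
      = ∑ i, c i * (R i - Rstar τ i) := by
    refine (Fin.sum_univ_eq_sum_range
      (fun k => (c (σ (K k))) * (R (σ (K k)) - Rstar τ (σ (K k)))) M').symm.trans ?_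
    refine (Finset.sum_congr rfl fun i _ => ?_).trans
      (Equiv.sum_comp σ (fun i => c i * (R i - Rstar τ i)))
    rw [show K (i : ℕ) = i from Fin.ext (hKlt i i.2)]
  have hfdiff : (∑ i, c i * (R i - Rstar τ i)) = f R - f (Rstar τ) := by
    rw [hflin R, hflin (Rstar τ), ← Finset.sum_sub_distrib]
    exact Finset.sum_congr rfl fun i _ => by ring
  have hend := hsep _ (hbase τ)
  rw [hre, hfdiff] at habel
  linarith
end
end

section
/- Let (Ȳ,Z̄,V) be random variables over finite alphabets with joint pmf p'(ȳ,v)·∏_{m=1}^{M'} q'_m(z_m|y_m). Then for any two disjoint nonempty sets I, I' ⊆ {1,…,M'}: I(Ȳ_I;Z̄_I|Z̄_{(I∪I')^c},V) = I(Ȳ_I;Z̄_I|Z̄_{I^c},V) + I(Z̄_I;Z̄_{I'}|Z̄_{(I∪I')^c},V). -/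
open Finset
open scoped Classical

noncomputable section

section Aux

lemma Hent_eq_sum_omega {Ω α : Type*} [Fintype Ω] [Fintype α] (P : Ω → ℝ) (X : Ω → α) :
    Hent P X = -∑ ω, P ω * Real.logb 2 (dist P X (X ω)) := by
  unfold Hent
  congr 1
  have : ∀ a, dist P X a * Real.logb 2 (dist P X a)
      = ∑ ω, if X ω = a then P ω * Real.logb 2 (dist P X a) else 0 := by
    intro a
    rw [_root_.dist, Finset.sum_mul]
    exact Finset.sum_congr rfl fun ω _ => by rw [ite_mul, zero_mul]
  rw [Finset.sum_congr rfl fun a _ => this a, Finset.sum_comm]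
  refine Finset.sum_congr rfl fun ω _ => ?_
  rw [Finset.sum_ite_eq]
  simp

lemma le_dist {Ω α : Type*} [Fintype Ω] [Fintype α] (P : Ω → ℝ) (hP : ∀ ω, 0 ≤ P ω)
    (X : Ω → α) (ω : Ω) : P ω ≤ dist P X (X ω) := by
  have := Finset.single_le_sum (f := fun ω' => if X ω' = X ω then P ω' else 0)
    (fun ω' _ => by exact ite_nonneg (hP ω') le_rfl) (Finset.mem_univ ω)
  simpa [_root_.dist] using this

lemma Hent_comp_of_injective {Ω α β : Type*} [Fintype Ω] [Fintype α] [Fintype β]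
    (P : Ω → ℝ) (X : Ω → α) (f : α → β) (hf : Function.Injective f) :
    Hent P (fun ω => f (X ω)) = Hent P X := by
  have hd : ∀ a, dist P (fun ω => f (X ω)) (f a) = dist P X a := by
    intro a
    exact Finset.sum_congr rfl fun ω _ => by simp [hf.eq_iff]
  unfold Hent
  congr 1
  rw [← Finset.sum_subset (Finset.subset_univ (Finset.univ.image f))
    (fun b _ hb => ?_), Finset.sum_image (fun a _ a' _ h => hf h)]
  · exact Finset.sum_congr rfl fun a _ => by rw [hd]
  · have h0 : dist P (fun ω => f (X ω)) b = 0 := by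
      refine Finset.sum_eq_zero fun ω _ => ?_
      rw [if_neg]
      exact fun h => hb (Finset.mem_image.2 ⟨X ω, Finset.mem_univ _, h⟩)
    rw [h0, zero_mul]

lemma ite_split4 {A B C D : Prop} [Decidable A] [Decidable B] [Decidable C] [Decidable D]
    (x y : ℝ) :
    (if A ∧ B ∧ C ∧ D then x * y else 0)
      = (if B ∧ C then y else 0) * (if A ∧ D then x else 0) := by
  by_cases hA : A <;> by_cases hB : B <;> by_cases hC : C <;> by_cases hD : D <;>
    simp [hA, hB, hC, hD, mul_comm]

lemma ite_split3 {A C D T : Prop} [Decidable A] [Decidable C] [Decidable D] [Decidable T]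
    (hT : T) (x y : ℝ) :
    (if A ∧ C ∧ D then x * y else 0)
      = (if C ∧ T then y else 0) * (if A ∧ D then x else 0) := by
  by_cases hA : A <;> by_cases hC : C <;> by_cases hD : D <;>
    simp [hA, hC, hD, hT, mul_comm]

section YZVAux
variable {M' : ℕ} {𝒴 𝒵 : Fin M' → Type*} [∀ i, Fintype (𝒴 i)] [∀ i, Fintype (𝒵 i)]
  {V : Type*} [Fintype V]

lemma inner_sum2 (q : ∀ m, 𝒴 m → 𝒵 m → ℝ) (hq1 : ∀ m y, ∑ z, q m y z = 1)
    (T₁ T₂ : Finset (Fin M')) (hT : Disjoint T₁ T₂)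
    (c₁ : ∀ i : T₁, 𝒵 i.1) (c₂ : ∀ i : T₂, 𝒵 i.1) (y : ∀ m, 𝒴 m) :
    ∑ z : ∀ m, 𝒵 m, (if ((fun i : T₁ => z i.1) = c₁ ∧ (fun i : T₂ => z i.1) = c₂)
        then ∏ m, q m (y m) (z m) else 0)
      = (∏ i : T₁, q i.1 (y i.1) (c₁ i)) * ∏ i : T₂, q i.1 (y i.1) (c₂ i) := by
  classical
  set F : ∀ m, 𝒵 m → ℝ := fun m t =>
    if h : m ∈ T₁ then (if t = c₁ ⟨m, h⟩ then q m (y m) t else 0)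
    else if h : m ∈ T₂ then (if t = c₂ ⟨m, h⟩ then q m (y m) t else 0)
    else q m (y m) t with hF
  have hsummand : ∀ z : ∀ m, 𝒵 m,
      (if ((fun i : T₁ => z i.1) = c₁ ∧ (fun i : T₂ => z i.1) = c₂)
        then ∏ m, q m (y m) (z m) else 0) = ∏ m, F m (z m) := by
    intro z
    by_cases hz : ((fun i : T₁ => z i.1) = c₁ ∧ (fun i : T₂ => z i.1) = c₂)
    · rw [if_pos hz]
      refine Finset.prod_congr rfl fun m _ => ?_
      by_cases h1 : m ∈ T₁
      · have : z m = c₁ ⟨m, h1⟩ := congrFun hz.1 ⟨m, h1⟩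
        simp [hF, h1, this]
      · by_cases h2 : m ∈ T₂
        · have : z m = c₂ ⟨m, h2⟩ := congrFun hz.2 ⟨m, h2⟩
          simp [hF, h1, h2, this]
        · simp [hF, h1, h2]
    · rw [if_neg hz]
      rw [not_and_or] at hz
      rcases hz with hz | hz
      · have : ∃ i : T₁, z i.1 ≠ c₁ i := by
          by_contra h; push_neg at h; exact hz (funext h)
        obtain ⟨i, hi⟩ := this
        refine (Finset.prod_eq_zero (Finset.mem_univ i.1) ?_).symm
        simp [hF, i.2, hi]
      · have : ∃ i : T₂, z i.1 ≠ c₂ i := by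
          by_contra h; push_neg at h; exact hz (funext h)
        obtain ⟨i, hi⟩ := this
        refine (Finset.prod_eq_zero (Finset.mem_univ i.1) ?_).symm
        have h1 : i.1 ∉ T₁ := fun h => Finset.disjoint_left.mp hT h i.2
        simp [hF, h1, i.2, hi]
  rw [Finset.sum_congr rfl fun z _ => hsummand z, ← Fintype.prod_sum F]
  set g : Fin M' → ℝ := fun m =>
    if h : m ∈ T₁ then q m (y m) (c₁ ⟨m, h⟩)
    else if h : m ∈ T₂ then q m (y m) (c₂ ⟨m, h⟩) else 1 with hg
  have hcol : ∀ m, (∑ t, F m t) = g m := by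
    intro m
    by_cases h1 : m ∈ T₁
    · simp only [hF, hg, dif_pos h1]
      rw [Finset.sum_ite_eq' Finset.univ (c₁ ⟨m, h1⟩) (q m (y m))]
      simp
    · by_cases h2 : m ∈ T₂
      · simp only [hF, hg, dif_neg h1, dif_pos h2]
        rw [Finset.sum_ite_eq' Finset.univ (c₂ ⟨m, h2⟩) (q m (y m))]
        simp
      · simp only [hF, hg, dif_neg h1, dif_neg h2]
        exact hq1 m (y m)
  rw [Finset.prod_congr rfl fun m _ => hcol m]
  have hsub : ∏ m, g m = ∏ m ∈ T₁ ∪ T₂, g m := by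
    refine (Finset.prod_subset (Finset.subset_univ _) fun m _ hm => ?_).symm
    rw [Finset.mem_union] at hm
    push_neg at hm
    simp [hg, hm.1, hm.2]
  rw [hsub, Finset.prod_union hT]
  congr 1
  · rw [← Finset.prod_attach T₁ g, ← Finset.univ_eq_attach]
    exact Finset.prod_congr rfl fun i _ => by simp [hg, dif_pos i.2]
  · rw [← Finset.prod_attach T₂ g, ← Finset.univ_eq_attach]
    refine Finset.prod_congr rfl fun i _ => ?_
    have h1 : i.1 ∉ T₁ := fun h => Finset.disjoint_left.mp hT h i.2
    simp [hg, dif_neg h1, dif_pos i.2]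

lemma dist_proj (p' : (∀ i, 𝒴 i) × V → ℝ) (q : ∀ m, 𝒴 m → 𝒵 m → ℝ)
    (hq1 : ∀ m y, ∑ z, q m y z = 1) (I S : Finset (Fin M')) (hIS : Disjoint I S)
    (a : ∀ i : I, 𝒴 i.1) (c : (∀ i : S, 𝒵 i.1) × V) :
    dist (Pjoint p' q) (fun ω => (Ybar I ω, ZbarV S ω)) (a, c)
      = ∑ y : ∀ i, 𝒴 i, (∏ i : S, q i.1 (y i.1) (c.1 i))
          * (if (fun i : I => y i.1) = a then p' (y, c.2) else 0) := by
  rw [_root_.dist, Fintype.sum_prod_type]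
  refine Finset.sum_congr rfl fun y _ => ?_
  rw [Fintype.sum_prod_type]
  have htriv : ∀ z : ∀ i, 𝒵 i, (fun i : (∅ : Finset (Fin M')) => z i.1)
      = (fun i => (Finset.notMem_empty i.1 i.2).elim) :=
    fun z => funext fun i => (Finset.notMem_empty i.1 i.2).elim
  have key : ∀ (z : ∀ i, 𝒵 i) (v : V),
      (@ite ℝ ((Ybar I ((y, z, v) : Samp 𝒴 𝒵 V), ZbarV S ((y, z, v) : Samp 𝒴 𝒵 V)) = (a, c))
        (Classical.propDecidable _) (Pjoint p' q (y, z, v)) 0)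
      = (if ((fun i : S => z i.1) = c.1
            ∧ (fun i : (∅ : Finset (Fin M')) => z i.1)
                = (fun i => (Finset.notMem_empty i.1 i.2).elim))
          then ∏ m, q m (y m) (z m) else 0)
        * (if ((fun i : I => y i.1) = a ∧ v = c.2) then p' (y, v) else 0) := by
    intro z v
    have hcond : ((Ybar I ((y, z, v) : Samp 𝒴 𝒵 V), ZbarV S ((y, z, v) : Samp 𝒴 𝒵 V)) = (a, c))
        ↔ ((fun i : I => y i.1) = a ∧ (fun i : S => z i.1) = c.1 ∧ v = c.2) := by
      simp only [Prod.ext_iff]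
      exact Iff.rfl
    simp only [hcond]
    exact ite_split3 (htriv z) (p' (y, v)) (∏ m, q m (y m) (z m))
  trans (∑ z : ∀ i, 𝒵 i, ∑ v : V,
      (if ((fun i : S => z i.1) = c.1
            ∧ (fun i : (∅ : Finset (Fin M')) => z i.1)
                = (fun i => (Finset.notMem_empty i.1 i.2).elim))
          then ∏ m, q m (y m) (z m) else 0)
        * (if ((fun i : I => y i.1) = a ∧ v = c.2) then p' (y, v) else 0))
  · exact Finset.sum_congr rfl fun z _ => Finset.sum_congr rfl fun v _ => key z v
  rw [← Finset.sum_mul_sum,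
    inner_sum2 q hq1 S ∅ (Finset.disjoint_empty_right S) c.1 _ y]
  have hemp : (∏ i : (∅ : Finset (Fin M')),
      q i.1 (y i.1) ((fun j : (∅ : Finset (Fin M')) => (Finset.notMem_empty j.1 j.2).elim) i)) = 1 := by
    rw [Finset.univ_eq_attach, Finset.attach_empty, Finset.prod_empty]
  rw [hemp, mul_one]
  congr 1
  by_cases hA : (fun i : I => y i.1) = a
  · rw [if_pos hA]
    rw [Finset.sum_congr rfl fun v (_ : v ∈ Finset.univ) =>
      if_congr (and_iff_right hA) rfl rfl (Q := v = c.2),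
      Finset.sum_ite_eq' Finset.univ c.2 (fun v => p' (y, v))]
    simp
  · rw [if_neg hA]
    exact Finset.sum_eq_zero fun v _ => by rw [if_neg (fun h => hA h.1)]

lemma dist_factor (p' : (∀ i, 𝒴 i) × V → ℝ) (q : ∀ m, 𝒴 m → 𝒵 m → ℝ)
    (hq1 : ∀ m y, ∑ z, q m y z = 1) (I S : Finset (Fin M')) (hIS : Disjoint I S)
    (a : ∀ i : I, 𝒴 i.1) (b : ∀ i : I, 𝒵 i.1) (c : (∀ i : S, 𝒵 i.1) × V) :
    dist (Pjoint p' q) (fun ω => (Ybar I ω, Zbar I ω, ZbarV S ω)) (a, b, c)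
      = (∏ i : I, q i.1 (a i) (b i))
        * dist (Pjoint p' q) (fun ω => (Ybar I ω, ZbarV S ω)) (a, c) := by
  rw [dist_proj p' q hq1 I S hIS a c, _root_.dist, Fintype.sum_prod_type, Finset.mul_sum]
  refine Finset.sum_congr rfl fun y _ => ?_
  rw [Fintype.sum_prod_type]
  have key : ∀ (z : ∀ i, 𝒵 i) (v : V),
      (@ite ℝ ((Ybar I ((y, z, v) : Samp 𝒴 𝒵 V), Zbar I ((y, z, v) : Samp 𝒴 𝒵 V),
            ZbarV S ((y, z, v) : Samp 𝒴 𝒵 V)) = (a, b, c))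
        (Classical.propDecidable _) (Pjoint p' q (y, z, v)) 0)
      = (if ((fun i : I => z i.1) = b ∧ (fun i : S => z i.1) = c.1)
          then ∏ m, q m (y m) (z m) else 0)
        * (if ((fun i : I => y i.1) = a ∧ v = c.2) then p' (y, v) else 0) := by
    intro z v
    have hcond : (Ybar I ((y, z, v) : Samp 𝒴 𝒵 V), Zbar I ((y, z, v) : Samp 𝒴 𝒵 V),
          ZbarV S ((y, z, v) : Samp 𝒴 𝒵 V)) = (a, b, c)
        ↔ ((fun i : I => y i.1) = a ∧ (fun i : I => z i.1) = b
            ∧ (fun i : S => z i.1) = c.1 ∧ v = c.2) := by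
      simp only [Prod.ext_iff]
      exact Iff.rfl
    simp only [hcond]
    exact ite_split4 (p' (y, v)) (∏ m, q m (y m) (z m))
  trans (∑ z : ∀ i, 𝒵 i, ∑ v : V,
      (if ((fun i : I => z i.1) = b ∧ (fun i : S => z i.1) = c.1)
          then ∏ m, q m (y m) (z m) else 0)
        * (if ((fun i : I => y i.1) = a ∧ v = c.2) then p' (y, v) else 0))
  · exact Finset.sum_congr rfl fun z _ => Finset.sum_congr rfl fun v _ => key z v
  rw [← Finset.sum_mul_sum, inner_sum2 q hq1 I S hIS b c.1 y]
  by_cases hA : (fun i : I => y i.1) = a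
  · have hQ : (∏ i : I, q i.1 (y i.1) (b i)) = ∏ i : I, q i.1 (a i) (b i) :=
      Finset.prod_congr rfl fun i _ => by rw [congrFun hA i]
    have hv : (∑ v : V, if ((fun i : I => y i.1) = a ∧ v = c.2) then p' (y, v) else 0)
        = if (fun i : I => y i.1) = a then p' (y, c.2) else 0 := by
      rw [if_pos hA]
      rw [Finset.sum_congr rfl fun v (_ : v ∈ Finset.univ) =>
        if_congr (and_iff_right hA) rfl rfl (Q := v = c.2),
        Finset.sum_ite_eq' Finset.univ c.2 (fun v => p' (y, v))]
      simp
    rw [hv, hQ]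
    ring
  · have h0 : (∑ v : V, if ((fun i : I => y i.1) = a ∧ v = c.2) then p' (y, v) else 0) = 0 :=
      Finset.sum_eq_zero fun v _ => by rw [if_neg (fun h => hA h.1)]
    rw [h0, if_neg hA]
    ring

lemma Pjoint_nonneg (p' : (∀ i, 𝒴 i) × V → ℝ) (q : ∀ m, 𝒴 m → 𝒵 m → ℝ)
    (hp'0 : ∀ yv, 0 ≤ p' yv) (hq0 : ∀ m y z, 0 ≤ q m y z) (ω : Samp 𝒴 𝒵 V) :
    0 ≤ Pjoint p' q ω :=
  mul_nonneg (hp'0 _) (Finset.prod_nonneg fun m _ => hq0 m _ _)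

lemma ent_diff (p' : (∀ i, 𝒴 i) × V → ℝ) (q : ∀ m, 𝒴 m → 𝒵 m → ℝ)
    (hp'0 : ∀ yv, 0 ≤ p' yv) (hq0 : ∀ m y z, 0 ≤ q m y z)
    (hq1 : ∀ m y, ∑ z, q m y z = 1) (I S : Finset (Fin M')) (hIS : Disjoint I S) :
    Hent (Pjoint p' q) (fun ω => (Ybar I ω, Zbar I ω, ZbarV S ω))
      - Hent (Pjoint p' q) (fun ω => (Ybar I ω, ZbarV S ω))
    = -∑ ω : Samp 𝒴 𝒵 V, Pjoint p' q ω
        * Real.logb 2 (∏ i : I, q i.1 (ω.1 i.1) (ω.2.1 i.1)) := by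
  rw [Hent_eq_sum_omega, Hent_eq_sum_omega, neg_sub_neg, ← Finset.sum_sub_distrib,
    ← Finset.sum_neg_distrib]
  refine Finset.sum_congr rfl fun ω _ => ?_
  by_cases hP : Pjoint p' q ω = 0
  · rw [hP]; ring
  · have hPpos : 0 < Pjoint p' q ω :=
      lt_of_le_of_ne (Pjoint_nonneg p' q hp'0 hq0 ω) (Ne.symm hP)
    have hfac : dist (Pjoint p' q) (fun ω => (Ybar I ω, Zbar I ω, ZbarV S ω))
          (Ybar I ω, Zbar I ω, ZbarV S ω)
        = (∏ i : I, q i.1 (ω.1 i.1) (ω.2.1 i.1))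
          * dist (Pjoint p' q) (fun ω => (Ybar I ω, ZbarV S ω)) (Ybar I ω, ZbarV S ω) :=
      dist_factor p' q hq1 I S hIS (Ybar I ω) (Zbar I ω) (ZbarV S ω)
    have hdpos : 0 < dist (Pjoint p' q) (fun ω => (Ybar I ω, ZbarV S ω)) (Ybar I ω, ZbarV S ω) :=
      lt_of_lt_of_le hPpos
        (le_dist (Pjoint p' q) (Pjoint_nonneg p' q hp'0 hq0) (fun ω => (Ybar I ω, ZbarV S ω)) ω)
    have hd'pos : 0 < dist (Pjoint p' q) (fun ω => (Ybar I ω, Zbar I ω, ZbarV S ω))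
        (Ybar I ω, Zbar I ω, ZbarV S ω) :=
      lt_of_lt_of_le hPpos
        (le_dist (Pjoint p' q) (Pjoint_nonneg p' q hp'0 hq0)
          (fun ω => (Ybar I ω, Zbar I ω, ZbarV S ω)) ω)
    have hQpos : 0 < ∏ i : I, q i.1 (ω.1 i.1) (ω.2.1 i.1) := by
      rcases lt_or_eq_of_le (Finset.prod_nonneg
        (fun (i : {x // x ∈ I}) _ => hq0 i.1 (ω.1 i.1) (ω.2.1 i.1))) with h | h
      · exact h
      · exfalso; rw [hfac, ← h, zero_mul] at hd'pos; exact lt_irrefl 0 hd'pos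
    rw [hfac, Real.logb_mul (ne_of_gt hQpos) (ne_of_gt hdpos)]
    ring

end YZVAux

lemma main_chain (M' : ℕ) (𝒴 𝒵 : Fin M' → Type) [∀ i, Fintype (𝒴 i)]
    [∀ i, Fintype (𝒵 i)] (V : Type) [Fintype V]
    (p' : (∀ i, 𝒴 i) × V → ℝ) (q : ∀ m, 𝒴 m → 𝒵 m → ℝ)
    (hp'0 : ∀ yv, 0 ≤ p' yv)
    (hq0 : ∀ m y z, 0 ≤ q m y z) (hq1 : ∀ m y, ∑ z, q m y z = 1)
    (I I' : Finset (Fin M')) (hII' : Disjoint I I') :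
    Hent (Pjoint p' q) (fun ω => (Ybar I ω, ZbarV (I ∪ I')ᶜ ω))
      + Hent (Pjoint p' q) (fun ω => (Zbar I ω, ZbarV (I ∪ I')ᶜ ω))
      - Hent (Pjoint p' q) (fun ω => (Ybar I ω, Zbar I ω, ZbarV (I ∪ I')ᶜ ω))
      - Hent (Pjoint p' q) (ZbarV (I ∪ I')ᶜ)
    = (Hent (Pjoint p' q) (fun ω => (Ybar I ω, ZbarV Iᶜ ω))
      + Hent (Pjoint p' q) (fun ω => (Zbar I ω, ZbarV Iᶜ ω))
      - Hent (Pjoint p' q) (fun ω => (Ybar I ω, Zbar I ω, ZbarV Iᶜ ω))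
      - Hent (Pjoint p' q) (ZbarV Iᶜ))
      + (Hent (Pjoint p' q) (fun ω => (Zbar I ω, ZbarV (I ∪ I')ᶜ ω))
      + Hent (Pjoint p' q) (fun ω => (Zbar I' ω, ZbarV (I ∪ I')ᶜ ω))
      - Hent (Pjoint p' q) (fun ω => (Zbar I ω, Zbar I' ω, ZbarV (I ∪ I')ᶜ ω))
      - Hent (Pjoint p' q) (ZbarV (I ∪ I')ᶜ)) := by
  have hsub1 : ∀ i : Fin M', i ∈ I' → i ∈ Iᶜ := fun i hi =>
    Finset.mem_compl.mpr (fun hI => Finset.disjoint_left.mp hII' hI hi)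
  have hsub2 : ∀ i : Fin M', i ∈ (I ∪ I')ᶜ → i ∈ Iᶜ := fun i hi =>
    Finset.mem_compl.mpr (fun hI => Finset.mem_compl.mp hi (Finset.mem_union_left _ hI))
  have hdisjJ : Disjoint I (I ∪ I')ᶜ := Finset.disjoint_left.mpr
    (fun {i} hi hic => Finset.mem_compl.mp hic (Finset.mem_union_left _ hi))
  have hdisjIc : Disjoint I Iᶜ := disjoint_compl_right
  have h1 := ent_diff p' q hp'0 hq0 hq1 I (I ∪ I')ᶜ hdisjJ
  have h2 := ent_diff p' q hp'0 hq0 hq1 I Iᶜ hdisjIc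
  -- relabeling h3 : H(Z_I, Z_{Iᶜ}, V) = H(Z_I, Z_{I'}, Z_J, V)
  have h3 : Hent (Pjoint p' q) (fun ω => (Zbar I ω, Zbar I' ω, ZbarV (I ∪ I')ᶜ ω))
      = Hent (Pjoint p' q) (fun ω => (Zbar I ω, ZbarV Iᶜ ω)) := by
    refine Hent_comp_of_injective (Pjoint p' q)
      (fun ω => (Zbar I ω, ZbarV Iᶜ ω))
      (fun p => (p.1, fun i : I' => p.2.1 ⟨i.1, hsub1 i.1 i.2⟩,
        (fun i : ((I ∪ I')ᶜ : Finset (Fin M')) => p.2.1 ⟨i.1, hsub2 i.1 i.2⟩, p.2.2))) ?_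
    intro x y h
    simp only [Prod.ext_iff] at h
    obtain ⟨h1', h2', h3', h4'⟩ := h
    refine Prod.ext h1' (Prod.ext (funext fun i => ?_) h4')
    by_cases hi' : i.1 ∈ I'
    · exact congrFun h2' ⟨i.1, hi'⟩
    · have hiJ : i.1 ∈ (I ∪ I')ᶜ := Finset.mem_compl.mpr
        (fun hmem => (Finset.mem_union.mp hmem).elim
          (fun h => Finset.mem_compl.mp i.2 h) hi')
      exact congrFun h3' ⟨i.1, hiJ⟩
  have h4 : Hent (Pjoint p' q) (fun ω => (Zbar I' ω, ZbarV (I ∪ I')ᶜ ω))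
      = Hent (Pjoint p' q) (ZbarV Iᶜ) := by
    refine Hent_comp_of_injective (Pjoint p' q) (ZbarV Iᶜ)
      (fun p => (fun i : I' => p.1 ⟨i.1, hsub1 i.1 i.2⟩,
        (fun i : ((I ∪ I')ᶜ : Finset (Fin M')) => p.1 ⟨i.1, hsub2 i.1 i.2⟩, p.2))) ?_
    intro x y h
    simp only [Prod.ext_iff] at h
    obtain ⟨h1', h2', h3'⟩ := h
    refine Prod.ext (funext fun i => ?_) h3'
    by_cases hi' : i.1 ∈ I'
    · exact congrFun h1' ⟨i.1, hi'⟩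
    · have hiJ : i.1 ∈ (I ∪ I')ᶜ := Finset.mem_compl.mpr
        (fun hmem => (Finset.mem_union.mp hmem).elim
          (fun h => Finset.mem_compl.mp i.2 h) hi')
      exact congrFun h2' ⟨i.1, hiJ⟩
  linarith [h1, h2, h3, h4]

end Aux

/-- Lemma B.1 (le:chain') of the paper: for disjoint nonempty `I, I' ⊆ {1,…,M'}`,
`I(Ȳ_I; Z̄_I | Z̄_{(I∪I')ᶜ}, V) = I(Ȳ_I; Z̄_I | Z̄_{Iᶜ}, V) + I(Z̄_I; Z̄_{I'} | Z̄_{(I∪I')ᶜ}, V)`. -/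
theorem statement_3 (M' : ℕ) (𝒴 𝒵 : Fin M' → Type) [∀ i, Fintype (𝒴 i)]
    [∀ i, Fintype (𝒵 i)] (V : Type) [Fintype V]
    (p' : (∀ i, 𝒴 i) × V → ℝ) (q : ∀ m, 𝒴 m → 𝒵 m → ℝ)
    (hp'0 : ∀ yv, 0 ≤ p' yv) (hp'1 : ∑ yv, p' yv = 1)
    (hq0 : ∀ m y z, 0 ≤ q m y z) (hq1 : ∀ m y, ∑ z, q m y z = 1)
    (I I' : Finset (Fin M')) (hI : I.Nonempty) (hI' : I'.Nonempty)
    (hII' : Disjoint I I') :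
    condMI (Pjoint p' q) (Ybar I) (Zbar I) (ZbarV (I ∪ I')ᶜ)
      = condMI (Pjoint p' q) (Ybar I) (Zbar I) (ZbarV Iᶜ)
        + condMI (Pjoint p' q) (Zbar I) (Zbar I') (ZbarV (I ∪ I')ᶜ) := by
  unfold condMI
  linarith [main_chain M' 𝒴 𝒵 V p' q hp'0 hq0 hq1 I I' hII']
end
end

section
/- Let (Ȳ,Z̄,V) be random variables over finite alphabets with joint pmf p'(ȳ,v)·∏_{m=1}^{M'} q'_m(z_m|y_m). Then for any nonempty set I ⊆ {1,…,M'}, listed as I = {i(1),…,i(m)} (any fixed enumeration of its m elements): I(Ȳ_I;Z̄_I|Z̄_{I^c},V) = Σ_{j=1}^{m} I(Y_{i(j)};Z_{i(j)}|Z̄_{{1,…,M'}\{i(j),i(j+1),…,i(m)}},V). -/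
open Finset
open scoped Classical

noncomputable section

set_option linter.unusedSectionVars false
set_option maxHeartbeats 1000000

section Helpers

variable {Ω α β : Type*} [Fintype Ω] [Fintype α] [Fintype β]

lemma dist_comp_inj (P : Ω → ℝ) (X : Ω → α) {f : α → β} (hf : Function.Injective f) (b : α) :
    dist P (fun ω => f (X ω)) (f b) = dist P X b := by
  unfold _root_.dist
  refine Finset.sum_congr rfl fun ω _ => ?_
  simp [hf.eq_iff]

lemma dist_comp_notin (P : Ω → ℝ) (X : Ω → α) (f : α → β) (c : β) (hc : ∀ a, f a ≠ c) :
    dist P (fun ω => f (X ω)) c = 0 := by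
  unfold _root_.dist
  exact Finset.sum_eq_zero fun ω _ => by simp [hc]

lemma Hent_comp_inj (P : Ω → ℝ) (X : Ω → α) {f : α → β} (hf : Function.Injective f) :
    Hent P (fun ω => f (X ω)) = Hent P X := by
  unfold Hent
  congr 1
  rw [← Finset.sum_subset (Finset.subset_univ (Finset.univ.image f))
      (by
        intro b _ hb
        have h0 : dist P (fun ω => f (X ω)) b = 0 :=
          dist_comp_notin P X f b fun a hab => hb (Finset.mem_image.2 ⟨a, Finset.mem_univ a, hab⟩)
        simp [h0])]
  rw [Finset.sum_image (fun a _ a' _ h => hf h)]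
  exact Finset.sum_congr rfl fun a _ => by rw [dist_comp_inj P X hf]

lemma Hent_eq_of_inj (P : Ω → ℝ) (X : Ω → α) (Y : Ω → β) (f : α → β)
    (hf : Function.Injective f) (hfX : ∀ ω, f (X ω) = Y ω) : Hent P Y = Hent P X := by
  have hY : Y = fun ω => f (X ω) := funext fun ω => (hfX ω).symm
  rw [hY, Hent_comp_inj P X hf]

lemma mul_logb_mul (a b : ℝ) :
    a * b * Real.logb 2 (a * b) = b * (a * Real.logb 2 a) + a * (b * Real.logb 2 b) := by
  rcases eq_or_ne a 0 with rfl | ha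
  · simp
  rcases eq_or_ne b 0 with rfl | hb
  · simp
  rw [Real.logb_mul ha hb]
  ring

lemma Hent_swap {γ : Type*} [Fintype γ]
    (P : Ω → ℝ) (A : Ω → α) (B : Ω → β) (C : Ω → γ) :
    Hent P (fun ω => (A ω, B ω, C ω)) = Hent P (fun ω => (B ω, (A ω, C ω))) :=
  Hent_eq_of_inj P (fun ω => (B ω, (A ω, C ω))) (fun ω => (A ω, B ω, C ω))
    (fun p => (p.2.1, (p.1, p.2.2)))
    (by
      rintro ⟨b, a, c⟩ ⟨b', a', c'⟩ h
      simp only [Prod.mk.injEq] at h ⊢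
      tauto)
    (fun ω => rfl)

lemma telescope (m : ℕ) (F : ℕ → ℝ) (d : Fin m → ℝ)
    (hstep : ∀ j : Fin m, F (j.1 + 1) = F j.1 + d j) :
    F m = F 0 + ∑ j, d j := by
  set d' : ℕ → ℝ := fun k => if h : k < m then d ⟨k, h⟩ else 0 with hd'
  have key : ∀ n, n ≤ m → F n = F 0 + ∑ k ∈ Finset.range n, d' k := by
    intro n
    induction n with
    | zero => simp
    | succ n ih =>
      intro hn
      have hn' : n < m := hn
      have hs := hstep ⟨n, hn'⟩
      rw [Finset.sum_range_succ, ← add_assoc, ← ih hn'.le, hs]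
      congr 1
      simp [hd', hn']
  rw [key m le_rfl]
  congr 1
  rw [← Fin.sum_univ_eq_sum_range d' m]
  exact Finset.sum_congr rfl fun j _ => by simp [hd', j.2]

end Helpers

section KeyLemmas

variable {M' : ℕ} {𝒴 𝒵 : Fin M' → Type} [∀ i, Fintype (𝒴 i)] [∀ i, Fintype (𝒵 i)]
  {V : Type} [Fintype V]

lemma piSplitAt_symm_eq_update (j : Fin M') (zj z : 𝒵 j) (w : ∀ i : {i // i ≠ j}, 𝒵 i) :
    (Equiv.piSplitAt j 𝒵).symm (zj, w)
      = Function.update ((Equiv.piSplitAt j 𝒵).symm (z, w)) j zj := by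
  funext i
  rcases eq_or_ne i j with rfl | h
  · simp
  · simp [h, Function.update_of_ne h]

lemma sum_samp (j : Fin M') (f : Samp 𝒴 𝒵 V → ℝ) :
    ∑ ω, f ω
      = ∑ y : ∀ i, 𝒴 i, ∑ w : ∀ i : {i // i ≠ j}, 𝒵 i, ∑ v : V, ∑ zj : 𝒵 j,
          f (y, (Equiv.piSplitAt j 𝒵).symm (zj, w), v) := by
  rw [Fintype.sum_prod_type]
  refine Finset.sum_congr rfl fun y _ => ?_
  rw [Fintype.sum_prod_type]
  rw [← Equiv.sum_comp (Equiv.piSplitAt j 𝒵).symm (fun zb => ∑ v, f (y, zb, v))]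
  rw [Fintype.sum_prod_type]
  rw [Finset.sum_comm]
  refine Finset.sum_congr rfl fun w _ => ?_
  rw [Finset.sum_comm]

lemma Pjoint_split (p' : (∀ i, 𝒴 i) × V → ℝ) (q : ∀ m, 𝒴 m → 𝒵 m → ℝ)
    (j : Fin M') (y : ∀ i, 𝒴 i) (v : V) (zj : 𝒵 j) (w : ∀ i : {i // i ≠ j}, 𝒵 i) :
    Pjoint p' q (y, (Equiv.piSplitAt j 𝒵).symm (zj, w), v)
      = p' (y, v) * (q j (y j) zj *
          ∏ i ∈ Finset.univ.erase j, q i (y i) ((Equiv.piSplitAt j 𝒵).symm (zj, w) i)) := by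
  unfold Pjoint
  dsimp only
  congr 1
  rw [← Finset.mul_prod_erase Finset.univ _ (Finset.mem_univ j)]
  congr 2
  simp

lemma prod_erase_indep (q : ∀ m, 𝒴 m → 𝒵 m → ℝ) (j : Fin M') (y : ∀ i, 𝒴 i)
    (zj z : 𝒵 j) (w : ∀ i : {i // i ≠ j}, 𝒵 i) :
    ∏ i ∈ Finset.univ.erase j, q i (y i) ((Equiv.piSplitAt j 𝒵).symm (zj, w) i)
      = ∏ i ∈ Finset.univ.erase j, q i (y i) ((Equiv.piSplitAt j 𝒵).symm (z, w) i) :=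
  Finset.prod_congr rfl fun i hi => by
    rw [piSplitAt_symm_eq_update j zj z w,
      Function.update_of_ne (Finset.mem_erase.1 hi).1]

lemma dist_pair (p' : (∀ i, 𝒴 i) × V → ℝ) (q : ∀ m, 𝒴 m → 𝒵 m → ℝ)
    (hq1 : ∀ m y, ∑ z, q m y z = 1) (j : Fin M') {α : Type} [Fintype α]
    (X : Samp 𝒴 𝒵 V → α)
    (hXz : ∀ (y : ∀ i, 𝒴 i) (zb : ∀ i, 𝒵 i) (v : V) (z' : 𝒵 j),
      X (y, Function.update zb j z', v) = X (y, zb, v))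
    (g : α → 𝒴 j) (hg : ∀ ω, g (X ω) = ω.1 j) (z : 𝒵 j) (x : α) :
    dist (Pjoint p' q) (fun ω => (ω.2.1 j, X ω)) (z, x)
      = q j (g x) z * dist (Pjoint p' q) X x := by
  have hXc : ∀ (y : ∀ i, 𝒴 i) (w : ∀ i : {i // i ≠ j}, 𝒵 i) (v : V) (zj : 𝒵 j),
      X (y, (Equiv.piSplitAt j 𝒵).symm (zj, w), v)
        = X (y, (Equiv.piSplitAt j 𝒵).symm (z, w), v) := by
    intro y w v zj
    rw [piSplitAt_symm_eq_update j zj z w, hXz]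
  have hsj : ∀ (zj : 𝒵 j) (w : ∀ i : {i // i ≠ j}, 𝒵 i),
      (Equiv.piSplitAt j 𝒵).symm (zj, w) j = zj := by intro zj w; simp
  have h2 : dist (Pjoint p' q) X x
      = ∑ y : ∀ i, 𝒴 i, ∑ w : ∀ i : {i // i ≠ j}, 𝒵 i, ∑ v : V,
          (if X (y, (Equiv.piSplitAt j 𝒵).symm (z, w), v) = x then
            p' (y, v) * ∏ i ∈ Finset.univ.erase j,
              q i (y i) ((Equiv.piSplitAt j 𝒵).symm (z, w) i)
          else 0) := by
    unfold _root_.dist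
    rw [sum_samp j]
    refine Finset.sum_congr rfl fun y _ => Finset.sum_congr rfl fun w _ =>
      Finset.sum_congr rfl fun v _ => ?_
    by_cases hc : X (y, (Equiv.piSplitAt j 𝒵).symm (z, w), v) = x
    · rw [Finset.sum_congr rfl (fun zj _ => by rw [hXc y w v zj, if_pos hc, Pjoint_split,
        prod_erase_indep q j y zj z w])]
      rw [if_pos hc, ← Finset.mul_sum, ← Finset.sum_mul, hq1, one_mul]
    · rw [Finset.sum_congr rfl (fun zj _ => by rw [hXc y w v zj, if_neg hc]), if_neg hc,
        Finset.sum_const, smul_zero]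
  have h1 : dist (Pjoint p' q) (fun ω => (ω.2.1 j, X ω)) (z, x)
      = q j (g x) z * ∑ y : ∀ i, 𝒴 i, ∑ w : ∀ i : {i // i ≠ j}, 𝒵 i, ∑ v : V,
          (if X (y, (Equiv.piSplitAt j 𝒵).symm (z, w), v) = x then
            p' (y, v) * ∏ i ∈ Finset.univ.erase j,
              q i (y i) ((Equiv.piSplitAt j 𝒵).symm (z, w) i)
          else 0) := by
    unfold _root_.dist
    rw [sum_samp j, Finset.mul_sum]
    refine Finset.sum_congr rfl fun y _ => ?_
    rw [Finset.mul_sum]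
    refine Finset.sum_congr rfl fun w _ => ?_
    rw [Finset.mul_sum]
    refine Finset.sum_congr rfl fun v _ => ?_
    dsimp only
    rw [Finset.sum_eq_single_of_mem z (Finset.mem_univ z)
      (fun zj _ hzj => by simp only [hsj zj w]; simp [Prod.mk.injEq, hzj])]
    simp only [hsj z w]
    by_cases hc : X (y, (Equiv.piSplitAt j 𝒵).symm (z, w), v) = x
    · rw [if_pos (by rw [hc]), if_pos hc, Pjoint_split]
      have hyj : g x = y j := by
        have h5 := hg (y, (Equiv.piSplitAt j 𝒵).symm (z, w), v)
        rw [hc] at h5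
        simpa using h5
      rw [hyj]
      ring
    · rw [if_neg (by simp [Prod.mk.injEq, hc]), if_neg hc, mul_zero]
  rw [h1, h2]

lemma Hent_pair (p' : (∀ i, 𝒴 i) × V → ℝ) (q : ∀ m, 𝒴 m → 𝒵 m → ℝ)
    (hq1 : ∀ m y, ∑ z, q m y z = 1) (j : Fin M') {α : Type} [Fintype α]
    (X : Samp 𝒴 𝒵 V → α)
    (hXz : ∀ (y : ∀ i, 𝒴 i) (zb : ∀ i, 𝒵 i) (v : V) (z' : 𝒵 j),
      X (y, Function.update zb j z', v) = X (y, zb, v))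
    (g : α → 𝒴 j) (hg : ∀ ω, g (X ω) = ω.1 j) :
    Hent (Pjoint p' q) (fun ω => (ω.2.1 j, X ω))
      = Hent (Pjoint p' q) X
        + ∑ y : 𝒴 j, dist (Pjoint p' q) (fun ω => ω.1 j) y *
            (-∑ zz : 𝒵 j, q j y zz * Real.logb 2 (q j y zz)) := by
  set P := Pjoint p' q with hP
  have hd := dist_pair p' q hq1 j X hXz g hg
  have expand : Hent P (fun ω => (ω.2.1 j, X ω))
      = -∑ x : α, ∑ zz : 𝒵 j,
          (q j (g x) zz * dist P X x) * Real.logb 2 (q j (g x) zz * dist P X x) := by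
    unfold Hent
    congr 1
    rw [Fintype.sum_prod_type, Finset.sum_comm]
    exact Finset.sum_congr rfl fun x _ => Finset.sum_congr rfl fun zz _ => by rw [hd zz x]
  have split : ∀ x : α, ∑ zz : 𝒵 j,
      (q j (g x) zz * dist P X x) * Real.logb 2 (q j (g x) zz * dist P X x)
      = dist P X x * (∑ zz : 𝒵 j, q j (g x) zz * Real.logb 2 (q j (g x) zz))
        + dist P X x * Real.logb 2 (dist P X x) := by
    intro x
    have e1 : ∀ zz : 𝒵 j,
        (q j (g x) zz * dist P X x) * Real.logb 2 (q j (g x) zz * dist P X x)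
        = dist P X x * (q j (g x) zz * Real.logb 2 (q j (g x) zz))
          + q j (g x) zz * (dist P X x * Real.logb 2 (dist P X x)) :=
      fun zz => mul_logb_mul (q j (g x) zz) (dist P X x)
    rw [Finset.sum_congr rfl fun zz _ => e1 zz, Finset.sum_add_distrib,
      ← Finset.mul_sum, ← Finset.sum_mul, hq1, one_mul]
  have hdY : ∀ y : 𝒴 j, dist P (fun ω => ω.1 j) y
      = ∑ x : α, if g x = y then dist P X x else 0 := by
    intro y
    have e3 : ∀ x : α, (if g x = y then dist P X x else 0)
        = ∑ ω : Samp 𝒴 𝒵 V, if X ω = x then (if g x = y then P ω else 0) else 0 := by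
      intro x
      by_cases h1 : g x = y
      · simp only [if_pos h1]; rfl
      · simp only [if_neg h1, ite_self, Finset.sum_const_zero]
    rw [Finset.sum_congr rfl fun x _ => e3 x, Finset.sum_comm]
    unfold _root_.dist
    refine Finset.sum_congr rfl fun ω _ => ?_
    rw [Finset.sum_ite_eq Finset.univ (X ω) (fun x => if g x = y then P ω else 0),
      if_pos (Finset.mem_univ _)]
    have hgy : (fun ω : Samp 𝒴 𝒵 V => ω.1 j) ω = g (X ω) := (hg ω).symm
    rw [hgy]
  have e4 : (∑ x : α, ∑ zz : 𝒵 j,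
        (q j (g x) zz * dist P X x) * Real.logb 2 (q j (g x) zz * dist P X x))
      = ∑ x : α, (dist P X x * (∑ zz : 𝒵 j, q j (g x) zz * Real.logb 2 (q j (g x) zz))
          + dist P X x * Real.logb 2 (dist P X x)) :=
    Finset.sum_congr rfl fun x _ => split x
  have e5 : ∑ y : 𝒴 j, dist P (fun ω => ω.1 j) y *
        (-∑ zz : 𝒵 j, q j y zz * Real.logb 2 (q j y zz))
      = -∑ x : α, dist P X x * ∑ zz : 𝒵 j, q j (g x) zz * Real.logb 2 (q j (g x) zz) := by
    calc ∑ y : 𝒴 j, dist P (fun ω => ω.1 j) y *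
          (-∑ zz : 𝒵 j, q j y zz * Real.logb 2 (q j y zz))
        = ∑ y : 𝒴 j, ∑ x : α, (if g x = y then
            dist P X x * (-∑ zz : 𝒵 j, q j y zz * Real.logb 2 (q j y zz)) else 0) := by
          refine Finset.sum_congr rfl fun y _ => ?_
          rw [hdY y, Finset.sum_mul]
          exact Finset.sum_congr rfl fun x _ => by rw [ite_mul, zero_mul]
      _ = ∑ x : α, ∑ y : 𝒴 j, (if g x = y then
            dist P X x * (-∑ zz : 𝒵 j, q j y zz * Real.logb 2 (q j y zz)) else 0) :=
          Finset.sum_comm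
      _ = ∑ x : α, dist P X x * (-∑ zz : 𝒵 j, q j (g x) zz * Real.logb 2 (q j (g x) zz)) := by
          refine Finset.sum_congr rfl fun x _ => ?_
          rw [Finset.sum_ite_eq Finset.univ (g x)
            (fun y => dist P X x * (-∑ zz : 𝒵 j, q j y zz * Real.logb 2 (q j y zz))),
            if_pos (Finset.mem_univ _)]
      _ = -∑ x : α, dist P X x * ∑ zz : 𝒵 j, q j (g x) zz * Real.logb 2 (q j (g x) zz) := by
          rw [← Finset.sum_neg_distrib]
          exact Finset.sum_congr rfl fun x _ => by ring
  rw [expand, e4, Finset.sum_add_distrib, neg_add, e5]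
  unfold Hent
  ring

lemma ZbarV_update (S : Finset (Fin M')) (k : Fin M') (hk : k ∉ S)
    (y : ∀ i, 𝒴 i) (zb : ∀ i, 𝒵 i) (v : V) (z' : 𝒵 k) :
    ZbarV (𝒴 := 𝒴) S (y, Function.update zb k z', v) = ZbarV S (y, zb, v) := by
  unfold ZbarV
  dsimp only
  congr 1
  funext i
  exact Function.update_of_ne (fun hik => hk (by rw [← hik]; exact i.2)) _ _

def insSplit (j : Fin M') (S : Finset (Fin M')) :
    ((∀ i : (insert j S : Finset (Fin M')), 𝒵 i.1) × V) → 𝒵 j × ((∀ i : S, 𝒵 i.1) × V) :=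
  fun wv => (wv.1 ⟨j, Finset.mem_insert_self j S⟩,
    (fun i => wv.1 ⟨i.1, Finset.mem_insert_of_mem i.2⟩, wv.2))

lemma insSplit_inj (j : Fin M') (S : Finset (Fin M')) :
    Function.Injective (insSplit (𝒵 := 𝒵) (V := V) j S) := by
  rintro ⟨w, v⟩ ⟨w', v'⟩ h
  simp only [insSplit, Prod.mk.injEq] at h
  obtain ⟨h1, h2, h3⟩ := h
  simp only [Prod.mk.injEq]
  refine ⟨funext fun i => ?_, h3⟩
  rcases Finset.mem_insert.1 i.2 with hij | hiS
  · have hi : i = ⟨j, Finset.mem_insert_self j S⟩ := Subtype.ext hij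
    rw [hi]; exact h1
  · have h4 := congrFun h2 ⟨i.1, hiS⟩
    have hi : i = ⟨i.1, Finset.mem_insert_of_mem hiS⟩ := Subtype.ext rfl
    rw [hi]; exact h4

lemma Hent_comb (P : Samp 𝒴 𝒵 V → ℝ) {α : Type} [Fintype α] (W : Samp 𝒴 𝒵 V → α)
    (j : Fin M') (S : Finset (Fin M')) :
    Hent P (fun ω => (W ω, ω.2.1 j, ZbarV S ω))
      = Hent P (fun ω => (W ω, ZbarV (insert j S) ω)) :=
  Hent_eq_of_inj P (fun ω => (W ω, ZbarV (insert j S) ω))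
    (fun ω => (W ω, ω.2.1 j, ZbarV S ω))
    (Prod.map id (insSplit j S))
    (Function.injective_id.prodMap (insSplit_inj j S))
    (fun ω => rfl)

lemma Hent_comb' (P : Samp 𝒴 𝒵 V → ℝ) (j : Fin M') (S : Finset (Fin M')) :
    Hent P (fun ω : Samp 𝒴 𝒵 V => (ω.2.1 j, ZbarV S ω)) = Hent P (ZbarV (insert j S)) :=
  Hent_eq_of_inj P (ZbarV (insert j S)) (fun ω => (ω.2.1 j, ZbarV S ω))
    (insSplit j S) (insSplit_inj j S) (fun ω => rfl)

def univSplit (I : Finset (Fin M')) :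
    ((∀ i : (Finset.univ : Finset (Fin M')), 𝒵 i.1) × V)
      → (∀ i : I, 𝒵 i.1) × ((∀ i : (Iᶜ : Finset (Fin M')), 𝒵 i.1) × V) :=
  fun wv => (fun i => wv.1 ⟨i.1, Finset.mem_univ _⟩,
    (fun i => wv.1 ⟨i.1, Finset.mem_univ _⟩, wv.2))

lemma univSplit_inj (I : Finset (Fin M')) :
    Function.Injective (univSplit (𝒵 := 𝒵) (V := V) I) := by
  rintro ⟨w, v⟩ ⟨w', v'⟩ h
  simp only [univSplit, Prod.mk.injEq] at h
  obtain ⟨h1, h2, h3⟩ := h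
  simp only [Prod.mk.injEq]
  refine ⟨funext fun i => ?_, h3⟩
  by_cases hi : i.1 ∈ I
  · have h4 := congrFun h1 ⟨i.1, hi⟩
    have he : i = ⟨i.1, Finset.mem_univ _⟩ := Subtype.ext rfl
    rw [he]; exact h4
  · have h4 := congrFun h2 ⟨i.1, Finset.mem_compl.2 hi⟩
    have he : i = ⟨i.1, Finset.mem_univ _⟩ := Subtype.ext rfl
    rw [he]; exact h4

end KeyLemmas

/-- Corollary B.4 (cor:mid) of the paper: for nonempty `I = {i(1),…,i(m)}` (any fixed
enumeration `e` of its `m` elements),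
`I(Ȳ_I; Z̄_I | Z̄_{Iᶜ}, V) = Σ_{j=1}^{m} I(Y_{i(j)}; Z_{i(j)} | Z̄_{{1,…,M'}\{i(j),…,i(m)}}, V)`. -/
theorem statement_6 (M' : ℕ) (𝒴 𝒵 : Fin M' → Type) [∀ i, Fintype (𝒴 i)]
    [∀ i, Fintype (𝒵 i)] (V : Type) [Fintype V]
    (p' : (∀ i, 𝒴 i) × V → ℝ) (q : ∀ m, 𝒴 m → 𝒵 m → ℝ)
    (hp'0 : ∀ yv, 0 ≤ p' yv) (hp'1 : ∑ yv, p' yv = 1)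
    (hq0 : ∀ m y z, 0 ≤ q m y z) (hq1 : ∀ m y, ∑ z, q m y z = 1)
    (I : Finset (Fin M')) (hI : I.Nonempty)
    (m : ℕ) (e : Fin m → Fin M') (he : Function.Injective e)
    (himg : Finset.image e Finset.univ = I) :
    condMI (Pjoint p' q) (Ybar I) (Zbar I) (ZbarV Iᶜ)
      = ∑ j : Fin m,
          condMI (Pjoint p' q)
            (fun ω : Samp 𝒴 𝒵 V => ω.1 (e j))
            (fun ω : Samp 𝒴 𝒵 V => ω.2.1 (e j))
            (ZbarV (((Finset.univ.filter fun k : Fin m => j ≤ k).image e)ᶜ)) := by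
  classical
  have hejI : ∀ j : Fin m, e j ∈ I := fun j =>
    himg ▸ Finset.mem_image.2 ⟨j, Finset.mem_univ j, rfl⟩
  set P := Pjoint p' q with hPdef
  set T : ℕ → Finset (Fin M') :=
    fun n => ((Finset.univ.filter fun k : Fin m => n ≤ k.1).image e)ᶜ with hTdef
  have hT0 : T 0 = Iᶜ := by
    rw [hTdef]
    dsimp only
    have h1 : (Finset.univ.filter fun k : Fin m => 0 ≤ k.1) = Finset.univ :=
      Finset.filter_true_of_mem fun k _ => Nat.zero_le _
    rw [h1, himg]
  have hTm : T m = Finset.univ := by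
    rw [hTdef]
    dsimp only
    have h1 : (Finset.univ.filter fun k : Fin m => m ≤ k.1) = ∅ :=
      Finset.filter_false_of_mem fun k _ => by have := k.2; omega
    rw [h1, Finset.image_empty, Finset.compl_empty]
  have hTnot : ∀ j : Fin m, e j ∉ T j.1 := by
    intro j
    rw [hTdef]
    dsimp only
    simp only [Finset.mem_compl, not_not]
    exact Finset.mem_image.2 ⟨j, Finset.mem_filter.2 ⟨Finset.mem_univ j, le_rfl⟩, rfl⟩
  have hTstep : ∀ j : Fin m, T (j.1 + 1) = insert (e j) (T j.1) := by
    intro j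
    rw [hTdef]
    dsimp only
    ext x
    simp only [Finset.mem_compl, Finset.mem_insert, Finset.mem_image, Finset.mem_filter,
      Finset.mem_univ, true_and, not_exists, not_and]
    constructor
    · intro hx
      by_cases hxe : x = e j
      · exact Or.inl hxe
      · refine Or.inr fun k hk hke => ?_
        have hkj : k ≠ j := by
          rintro rfl
          exact hxe hke.symm
        have hk1 : j.1 + 1 ≤ k.1 := by
          have hne : k.1 ≠ j.1 := fun hh => hkj (Fin.ext hh)
          omega
        exact hx k hk1 hke
    · rintro (rfl | hx) k hk hke
      · have hkj : k = j := he hke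
        rw [hkj] at hk
        omega
      · exact hx k (by omega) hke
  have hmatch : ∀ j : Fin m,
      ((Finset.univ.filter fun k : Fin m => j ≤ k).image e)ᶜ = T j.1 := by
    intro j
    rw [hTdef]
    dsimp only
    have h1 : (Finset.univ.filter fun k : Fin m => j ≤ k)
        = Finset.univ.filter fun k : Fin m => j.1 ≤ k.1 :=
      Finset.filter_congr fun k _ => Fin.le_def
    rw [h1]
  set c : Fin m → ℝ := fun j => ∑ y, dist P (fun ω : Samp 𝒴 𝒵 V => ω.1 (e j)) y *
      (-∑ zz, q (e j) y zz * Real.logb 2 (q (e j) y zz)) with hcdef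
  set h : ℕ → ℝ := fun n => Hent P (ZbarV (T n)) with hhdef
  set G : ℕ → ℝ :=
    fun n => Hent P (fun ω : Samp 𝒴 𝒵 V => (Ybar I ω, ZbarV (T n) ω)) with hGdef
  have e1 : ∀ j : Fin m,
      Hent P (fun ω : Samp 𝒴 𝒵 V => (ω.2.1 (e j), ZbarV (T j.1) ω)) = h (j.1 + 1) := by
    intro j
    show _ = Hent P (ZbarV (T (j.1 + 1)))
    rw [hTstep j]
    exact Hent_comb' P (e j) (T j.1)
  have e2 : ∀ j : Fin m,
      Hent P (fun ω : Samp 𝒴 𝒵 V => (ω.1 (e j), ω.2.1 (e j), ZbarV (T j.1) ω))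
        = Hent P (fun ω : Samp 𝒴 𝒵 V => (ω.1 (e j), ZbarV (T j.1) ω)) + c j := by
    intro j
    rw [Hent_swap P (fun ω : Samp 𝒴 𝒵 V => ω.1 (e j))
      (fun ω : Samp 𝒴 𝒵 V => ω.2.1 (e j)) (fun ω : Samp 𝒴 𝒵 V => ZbarV (T j.1) ω)]
    exact Hent_pair p' q hq1 (e j) (fun ω : Samp 𝒴 𝒵 V => (ω.1 (e j), ZbarV (T j.1) ω))
      (fun y zb v z' => by
        dsimp only
        rw [ZbarV_update (T j.1) (e j) (hTnot j)])
      Prod.fst (fun ω => rfl)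
  have e3 : ∀ j : Fin m, G (j.1 + 1) = G j.1 + c j := by
    intro j
    show Hent P (fun ω : Samp 𝒴 𝒵 V => (Ybar I ω, ZbarV (T (j.1 + 1)) ω)) = _
    rw [hTstep j]
    rw [← Hent_comb P (Ybar I) (e j) (T j.1)]
    rw [Hent_swap P (Ybar I) (fun ω : Samp 𝒴 𝒵 V => ω.2.1 (e j))
      (fun ω : Samp 𝒴 𝒵 V => ZbarV (T j.1) ω)]
    exact Hent_pair p' q hq1 (e j) (fun ω : Samp 𝒴 𝒵 V => (Ybar I ω, ZbarV (T j.1) ω))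
      (fun y zb v z' => by
        rw [ZbarV_update (T j.1) (e j) (hTnot j)]
        rfl)
      (fun p => p.1 ⟨e j, hejI j⟩) (fun ω => rfl)

  have hterm : ∀ j : Fin m,
      condMI P (fun ω : Samp 𝒴 𝒵 V => ω.1 (e j))
        (fun ω : Samp 𝒴 𝒵 V => ω.2.1 (e j))
        (ZbarV (((Finset.univ.filter fun k : Fin m => j ≤ k).image e)ᶜ))
      = h (j.1 + 1) - h j.1 - c j := by
    intro j
    rw [hmatch j]
    unfold condMI
    dsimp only
    have e0 : Hent P (ZbarV (T j.1)) = h j.1 := rfl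
    rw [e1 j, e2 j, e0]
    ring
  have hsum : (∑ j : Fin m,
        condMI P (fun ω : Samp 𝒴 𝒵 V => ω.1 (e j))
          (fun ω : Samp 𝒴 𝒵 V => ω.2.1 (e j))
          (ZbarV (((Finset.univ.filter fun k : Fin m => j ≤ k).image e)ᶜ)))
      = ∑ j : Fin m, (h (j.1 + 1) - h j.1 - c j) :=
    Finset.sum_congr rfl fun j _ => hterm j
  have t1 : Hent P (fun ω : Samp 𝒴 𝒵 V => (Ybar I ω, ZbarV Iᶜ ω)) = G 0 := by
    show _ = Hent P (fun ω : Samp 𝒴 𝒵 V => (Ybar I ω, ZbarV (T 0) ω))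
    rw [hT0]
  have t2 : Hent P (fun ω : Samp 𝒴 𝒵 V => (Zbar I ω, ZbarV Iᶜ ω)) = h m := by
    show _ = Hent P (ZbarV (T m))
    rw [hTm]
    exact (Hent_eq_of_inj P (ZbarV Finset.univ)
      (fun ω : Samp 𝒴 𝒵 V => (Zbar I ω, ZbarV Iᶜ ω))
      (univSplit I) (univSplit_inj I) (fun ω => rfl))
  have t3 : Hent P (fun ω : Samp 𝒴 𝒵 V => (Ybar I ω, Zbar I ω, ZbarV Iᶜ ω)) = G m := by
    show _ = Hent P (fun ω : Samp 𝒴 𝒵 V => (Ybar I ω, ZbarV (T m) ω))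
    rw [hTm]
    exact Hent_eq_of_inj P (fun ω : Samp 𝒴 𝒵 V => (Ybar I ω, ZbarV Finset.univ ω))
      (fun ω : Samp 𝒴 𝒵 V => (Ybar I ω, Zbar I ω, ZbarV Iᶜ ω))
      (Prod.map id (univSplit I))
      (Function.injective_id.prodMap (univSplit_inj I))
      (fun ω => rfl)
  have t4 : Hent P (ZbarV (M' := M') (𝒴 := 𝒴) (𝒵 := 𝒵) (V := V) Iᶜ) = h 0 := by
    show _ = Hent P (ZbarV (T 0))
    rw [hT0]
  have hGm : G m = G 0 + ∑ j : Fin m, c j := telescope m G c e3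
  have htel : h m = h 0 + ∑ j : Fin m, (h (j.1 + 1) - h j.1) :=
    telescope m h _ (fun j => by ring)
  rw [hsum, Finset.sum_sub_distrib]
  unfold condMI
  rw [t1, t2, t3, t4]
  linarith [hGm, htel]
end
end
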